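/- arXiv:1010.0755 — 2 statements merged into one kernel-verified Lean document; each statement's English description precedes it below -/
import Mathlib

section
/- Let w be an A₂ weight and let 𝒢* = 𝒢*(Q₀) be the stopping family associated to a cube Q₀ ∈ 𝒬, the weight w, and any collection 𝒬 ⊂ 𝒟. Then there is an absolute constant C (one may take C = 16/3) such that for every R ∈ 𝒟: Σ_{Q∈𝒢*: Q⊂R} w(Q) ≤ C·[w]_{A₂}·w(R). -/
open MeasureTheory Set
open scoped ENNReal NNReal Classical

noncomputable section

/-- The translation parameter space `Ω = ({0,1}^d)^ℤ` for random dyadic lattices. -/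
abbrev TransParam (d : ℕ) := ℤ → Fin d → Bool

/-- A dyadic cube: scale `k` (side length `2^k`) and integer position `m`. -/
structure DyadicCube (d : ℕ) where
  k : ℤ
  m : Fin d → ℤ

namespace DyadicCube

variable {d : ℕ}

/-- The translation vector `Σ_{j<k} ω_j 2^j` of the lattice `𝒟_ω` at generation `k`. -/
def shiftVec (ω : TransParam d) (k : ℤ) (i : Fin d) : ℝ :=
  ∑' j : {j : ℤ // j < k}, if ω j.1 i then (2:ℝ) ^ (j.1 : ℤ) else 0

/-- The point set of the cube `Q` in the translated dyadic lattice `𝒟_ω`. -/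
def set (ω : TransParam d) (Q : DyadicCube d) : Set (Fin d → ℝ) :=
  {x | ∀ i, (Q.m i : ℝ) * 2 ^ Q.k + shiftVec ω Q.k i ≤ x i ∧
            x i < ((Q.m i : ℝ) + 1) * 2 ^ Q.k + shiftVec ω Q.k i}

/-- Side length `ℓ(Q) = 2^k`. -/
def len (Q : DyadicCube d) : ℝ := 2 ^ Q.k

/-- Volume `|Q| = ℓ(Q)^d`. -/
def vol (Q : DyadicCube d) : ℝ := ((2:ℝ) ^ Q.k) ^ d

/-- The dyadic cube of generation `k` of `𝒟_ω` containing the point `x`. -/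
def cubeAt (ω : TransParam d) (k : ℤ) (x : Fin d → ℝ) : DyadicCube d :=
  ⟨k, fun i => ⌊(x i - shiftVec ω k i) / 2 ^ k⌋⟩

/-- The average of `f` on `Q` with respect to `μ` (zero if `μ(Q)` is zero or infinite). -/
def avg (ω : TransParam d) (μ : Measure (Fin d → ℝ)) (Q : DyadicCube d)
    (f : (Fin d → ℝ) → ℝ) : ℝ :=
  ((μ (Q.set ω)).toReal)⁻¹ * ∫ x in Q.set ω, f x ∂μ

/-- The conditional expectation `E^μ_Q f`. -/
def eproj (ω : TransParam d) (μ : Measure (Fin d → ℝ)) (Q : DyadicCube d)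
    (f : (Fin d → ℝ) → ℝ) : (Fin d → ℝ) → ℝ :=
  fun x => if x ∈ Q.set ω then avg ω μ Q f else 0

/-- The martingale difference `Δ^μ_Q f = -E^μ_Q f + Σ_{J ∈ ch(Q)} E^μ_J f`. -/
def mdiff (ω : TransParam d) (μ : Measure (Fin d → ℝ)) (Q : DyadicCube d)
    (f : (Fin d → ℝ) → ℝ) : (Fin d → ℝ) → ℝ :=
  fun x => if x ∈ Q.set ω then
      avg ω μ (cubeAt ω (Q.k - 1) x) f - avg ω μ Q f
    else 0

end DyadicCube

/-- `h` takes equal values at points lying in the same generation-`k` cube of `𝒟_ω`. -/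
def ConstOnScale {d : ℕ} (ω : TransParam d) (k : ℤ) (h : (Fin d → ℝ) → ℝ) : Prop :=
  ∀ x y : Fin d → ℝ, DyadicCube.cubeAt ω k x = DyadicCube.cubeAt ω k y → h x = h y

/-- A generalized Haar function for `Q`: supported on `Q` and constant on the children of `Q`. -/
def IsGenHaar {d : ℕ} (ω : TransParam d) (Q : DyadicCube d) (h : (Fin d → ℝ) → ℝ) : Prop :=
  (∀ x ∉ Q.set ω, h x = 0) ∧ ConstOnScale ω (Q.k - 1) h

/-- A `μ`-weighted Haar function for `Q`: an element of the range of `Δ^μ_Q` in `L²(μ)`,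
i.e. supported on `Q`, constant on the children of `Q`, with `μ`-mean zero. -/
def IsWeightedHaar {d : ℕ} (ω : TransParam d) (μ : Measure (Fin d → ℝ)) (Q : DyadicCube d)
    (h : (Fin d → ℝ) → ℝ) : Prop :=
  IsGenHaar ω Q h ∧ (∫ x, h x ∂μ) = 0 ∧ MemLp h 2 μ

/-- An elementary generalized dyadic shift with parameters `mm`, `nn` on the lattice `𝒟_ω`:
for each cube `Q` (in `cubes`) and each pair `Q' Q'' ⊆ Q` with `ℓ(Q') = 2^{-mm} ℓ(Q)`,
`ℓ(Q'') = 2^{-nn} ℓ(Q)`, a pair of generalized Haar functions `h1 Q Q' Q''` (for `Q'`)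
and `h2 Q Q' Q''` (for `Q''`) with `‖h1‖_∞ ⬝ ‖h2‖_∞ ≤ 1`. -/
structure ElemShift (d : ℕ) (ω : TransParam d) (mm nn : ℕ) where
  cubes : Set (DyadicCube d)
  h1 : DyadicCube d → DyadicCube d → DyadicCube d → (Fin d → ℝ) → ℝ
  h2 : DyadicCube d → DyadicCube d → DyadicCube d → (Fin d → ℝ) → ℝ
  haar1 : ∀ Q Q' Q'', IsGenHaar ω Q' (h1 Q Q' Q'')
  haar2 : ∀ Q Q' Q'', IsGenHaar ω Q'' (h2 Q Q' Q'')
  normBound : ∀ Q Q' Q'' x y, |h2 Q Q' Q'' x| * |h1 Q Q' Q'' y| ≤ 1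

namespace ElemShift

variable {d : ℕ} {ω : TransParam d} {mm nn : ℕ}

/-- The kernel `a_Q(x,y) = Σ_{Q',Q''} h_{Q''}^{Q'}(x) h_{Q'}^{Q''}(y)` (so `‖a_Q‖_∞ ≤ 1`);
only the pair `Q' ∋ y`, `Q'' ∋ x` of the prescribed generations contributes. -/
def kernelAt (S : ElemShift d ω mm nn) (Q : DyadicCube d) (x y : Fin d → ℝ) : ℝ :=
  if Q ∈ S.cubes ∧
     (DyadicCube.cubeAt ω (Q.k - mm) y).set ω ⊆ Q.set ω ∧
     (DyadicCube.cubeAt ω (Q.k - nn) x).set ω ⊆ Q.set ω then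
    S.h2 Q (DyadicCube.cubeAt ω (Q.k - mm) y) (DyadicCube.cubeAt ω (Q.k - nn) x) x *
      S.h1 Q (DyadicCube.cubeAt ω (Q.k - mm) y) (DyadicCube.cubeAt ω (Q.k - nn) x) y
  else 0

/-- The full kernel `A(x,y) = Σ_Q |Q|⁻¹ a_Q(x,y)`. -/
def kernel (S : ElemShift d ω mm nn) (x y : Fin d → ℝ) : ℝ :=
  ∑' Q : DyadicCube d, (DyadicCube.vol Q)⁻¹ * S.kernelAt Q x y

/-- `𝕊_μ f (x) = ∫ A(x,y) f(y) dμ(y)`. -/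
def op (S : ElemShift d ω mm nn) (μ : Measure (Fin d → ℝ)) (f : (Fin d → ℝ) → ℝ) :
    (Fin d → ℝ) → ℝ :=
  fun x => ∫ y, S.kernel x y * f y ∂μ

/-- `𝕊^*_ν g (y) = ∫ A(x,y) g(x) dν(x)`. -/
def opStar (S : ElemShift d ω mm nn) (ν : Measure (Fin d → ℝ)) (g : (Fin d → ℝ) → ℝ) :
    (Fin d → ℝ) → ℝ :=
  fun y => ∫ x, S.kernel x y * g x ∂ν

/-- The restricted shift `𝕊_𝒜`, keeping only the cubes in `𝒜`. -/
def opRestr (S : ElemShift d ω mm nn) (𝒜 : Set (DyadicCube d)) (μ : Measure (Fin d → ℝ))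
    (f : (Fin d → ℝ) → ℝ) : (Fin d → ℝ) → ℝ :=
  fun x => ∫ y, (∑' Q : DyadicCube d,
    if Q ∈ 𝒜 then (DyadicCube.vol Q)⁻¹ * S.kernelAt Q x y else 0) * f y ∂μ

/-- The shift is ordinary (non-generalized): all its Haar functions have mean zero. -/
def Ordinary (S : ElemShift d ω mm nn) : Prop :=
  ∀ Q Q' Q'', (∫ x, S.h1 Q Q' Q'' x) = 0 ∧ (∫ x, S.h2 Q Q' Q'' x) = 0

end ElemShift

/-- The axis-parallel cube with corner `c` and side length `ℓ`. -/
def stdCube {d : ℕ} (c : Fin d → ℝ) (ℓ : ℝ) : Set (Fin d → ℝ) :=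
  {x | ∀ i, c i ≤ x i ∧ x i < c i + ℓ}

/-- `A` is an `A₂` bound for the weight `w`:
`(|Q|⁻¹∫_Q w)(|Q|⁻¹∫_Q w⁻¹) ≤ A` for all cubes `Q`. -/
def A2BoundOn {d : ℕ} (w : (Fin d → ℝ) → ℝ) (A : ℝ) : Prop :=
  ∀ (c : Fin d → ℝ) (ℓ : ℝ), 0 < ℓ →
    (∫⁻ x in stdCube c ℓ, ENNReal.ofReal (w x)) *
      (∫⁻ x in stdCube c ℓ, ENNReal.ofReal ((w x)⁻¹)) ≤
      ENNReal.ofReal A * ENNReal.ofReal (ℓ ^ d) * ENNReal.ofReal (ℓ ^ d)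

/-- `A` is a joint `A₂` bound for the pair of measures `μ`, `ν`:
`(μ(I)/|I|)(ν(I)/|I|) ≤ A` for all cubes `I`. -/
def JointA2 {d : ℕ} (μ ν : Measure (Fin d → ℝ)) (A : ℝ) : Prop :=
  ∀ (c : Fin d → ℝ) (ℓ : ℝ), 0 < ℓ →
    μ (stdCube c ℓ) * ν (stdCube c ℓ) ≤
      ENNReal.ofReal A * ENNReal.ofReal (ℓ ^ d) * ENNReal.ofReal (ℓ ^ d)

/-- Distance between two sets. -/
def setDist {α : Type*} [PseudoMetricSpace α] (S T : Set α) : ℝ :=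
  sInf ((fun p : α × α => dist p.1 p.2) '' (S ×ˢ T))

/-- The long distance `D(Q,R) = dist(Q,R) + ℓ(Q) + ℓ(R)`. -/
def longDist {d : ℕ} (ω : TransParam d) (Q R : DyadicCube d) : ℝ :=
  setDist (Q.set ω) (R.set ω) + Q.len + R.len

/-- A cube `Q ∈ 𝒟_ω` is bad (with parameters `r₀`, `γ`) if there is a much bigger cube
`R ∈ 𝒟_ω` with `dist(Q,R) < ℓ(Q)^γ ℓ(R)^{1-γ}`. -/
def IsBad {d : ℕ} (r₀ : ℕ) (γ : ℝ) (ω : TransParam d) (Q : DyadicCube d) : Prop :=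
  ∃ R : DyadicCube d, Q.k + (r₀ : ℤ) < R.k ∧
    setDist (Q.set ω) (R.set ω) < Q.len ^ γ * R.len ^ (1 - γ)

/-- `P` is the product over `ℤ` of uniform measures on `{0,1}^d`. -/
def IsBernoulliProduct {d : ℕ} (P : Measure (TransParam d)) : Prop :=
  IsProbabilityMeasure P ∧
  ∀ (F : Finset (ℤ × Fin d)) (b : ℤ × Fin d → Bool),
    P {ω | ∀ p ∈ F, ω p.1 p.2 = b p} = (1 / 2 : ℝ≥0∞) ^ F.card

/-- A Calderón–Zygmund operator on `ℝ^d` with parameters `Ccz`, `α` and unweighted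
`L²` norm at most `normT`. -/
structure CZO (d : ℕ) (Ccz α normT : ℝ) where
  T : ((Fin d → ℝ) → ℝ) →ₗ[ℝ] ((Fin d → ℝ) → ℝ)
  K : (Fin d → ℝ) → (Fin d → ℝ) → ℝ
  l2bound : ∀ f, eLpNorm (T f) 2 volume ≤ ENNReal.ofReal normT * eLpNorm f 2 volume
  size : ∀ x y, x ≠ y → |K x y| ≤ Ccz / dist x y ^ d
  smooth : ∀ x x' y : Fin d → ℝ, dist x x' < dist x y / 2 →
    |K x y - K x' y| + |K y x - K y x'| ≤ Ccz * dist x x' ^ α / dist x y ^ ((d : ℝ) + α)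
  repr : ∀ f : (Fin d → ℝ) → ℝ, Measurable f → HasCompactSupport f →
    (∃ M, ∀ y, |f y| ≤ M) → ∀ x ∉ tsupport f, T f x = ∫ y, K x y * f y


/-- The weighted paraproduct `Π^μ = Π^μ_𝕊 : L²(μ) → L²(ν)`,
`Π^μ f = Σ_{Q∈𝒟} (E^μ_Q f) Σ_{R ⊆ Q, ℓ(R)=2^{-r}ℓ(Q)} Δ^ν_R 𝕊_μ 1_Q`. -/
def shiftPara {d : ℕ} {ω : TransParam d} {mm nn : ℕ} (S : ElemShift d ω mm nn)
    (μ ν : Measure (Fin d → ℝ)) (r : ℕ) (f : (Fin d → ℝ) → ℝ) : (Fin d → ℝ) → ℝ :=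
  fun x => ∑' Q : DyadicCube d,
    DyadicCube.eproj ω μ Q f x *
      DyadicCube.mdiff ω ν (DyadicCube.cubeAt ω (Q.k - r) x)
        (S.op μ (Set.indicator (Q.set ω) fun _ => (1:ℝ))) x

/-- The density `w(Q)/|Q|` of the weight `w` on the cube `Q`. -/
def dens {d : ℕ} (ω : TransParam d) (w : (Fin d → ℝ) → ℝ) (Q : DyadicCube d) : ℝ :=
  (∫ x in Q.set ω, w x) / Q.vol

/-- The maximal cubes `Q' ∈ 𝒬`, `Q' ⊆ Q`, with `w(Q')/|Q'| > 4 w(Q)/|Q|`: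
the stopping children of `Q`. -/
def stopNext {d : ℕ} (ω : TransParam d) (w : (Fin d → ℝ) → ℝ) (𝒬 : Set (DyadicCube d))
    (Q : DyadicCube d) : Set (DyadicCube d) :=
  {Q' | (Q' ∈ 𝒬 ∧ Q'.set ω ⊆ Q.set ω ∧ 4 * dens ω w Q < dens ω w Q') ∧
    ∀ Q'' : DyadicCube d, Q'' ∈ 𝒬 → Q''.set ω ⊆ Q.set ω → 4 * dens ω w Q < dens ω w Q'' →
      Q'.set ω ⊆ Q''.set ω → Q''.set ω ⊆ Q'.set ω}

/-- The generations of stopping cubes: `𝒢*₀ = {Q₀}`, and `𝒢*_{τ+1}` consists of the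
stopping children of the cubes of `𝒢*_τ`. -/
def stopGen {d : ℕ} (ω : TransParam d) (w : (Fin d → ℝ) → ℝ) (𝒬 : Set (DyadicCube d))
    (Q₀ : DyadicCube d) : ℕ → Set (DyadicCube d)
  | 0 => {Q₀}
  | (τ + 1) => {Q' | ∃ Q ∈ stopGen ω w 𝒬 Q₀ τ, Q' ∈ stopNext ω w 𝒬 Q}

/-- The stopping family `𝒢* = 𝒢*(Q₀) = ∪_τ 𝒢*_τ`. -/
def stopFam {d : ℕ} (ω : TransParam d) (w : (Fin d → ℝ) → ℝ) (𝒬 : Set (DyadicCube d))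
    (Q₀ : DyadicCube d) : Set (DyadicCube d) :=
  ⋃ τ : ℕ, stopGen ω w 𝒬 Q₀ τ

/-- `𝒫(R) = 𝒬(R) \ ∪_{R'∈𝒢*, R'⊊R} 𝒬(R')`. -/
def stopP {d : ℕ} (ω : TransParam d) (w : (Fin d → ℝ) → ℝ) (𝒬 : Set (DyadicCube d))
    (Q₀ R : DyadicCube d) : Set (DyadicCube d) :=
  {Q | Q ∈ 𝒬 ∧ Q.set ω ⊆ R.set ω ∧
    ∀ R' ∈ stopFam ω w 𝒬 Q₀, R'.set ω ⊂ R.set ω → ¬ Q.set ω ⊆ R'.set ω}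

/-- The good part `f_{good,ω} = Σ_{I ∈ 𝒟_ω, I good} Δ_I f` of a function. -/
def goodPart {d : ℕ} (r₀ : ℕ) (γ : ℝ) (ω : TransParam d) (f : (Fin d → ℝ) → ℝ) :
    (Fin d → ℝ) → ℝ :=
  fun x => ∑' k : ℤ,
    if IsBad r₀ γ ω (DyadicCube.cubeAt ω k x) then 0
    else DyadicCube.mdiff ω volume (DyadicCube.cubeAt ω k x) f x

/-- Conditioning: keep the coordinates `ω_j`, `j < k`, from `τ` and take the coordinates
`ω_j`, `j ≥ k`, from `ω`. -/
def splice {d : ℕ} (τ ω : TransParam d) (k : ℤ) : TransParam d :=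
  fun j => if j < k then τ j else ω j

/-- The event `A` depends only on the coordinates `ω_j`, `j < k`. -/
def DependsOnPast {d : ℕ} (k : ℤ) (A : Set (TransParam d)) : Prop :=
  ∀ ω ω' : TransParam d, (∀ j < k, ω j = ω' j) → (ω ∈ A ↔ ω' ∈ A)

/-- `U` is a generalized dyadic shift with parameters `mm`, `nn` on the lattice `𝒟_ω`:
a sum of at most `4^d` elementary generalized dyadic shifts. -/
def IsGenShiftOp {d : ℕ} (ω : TransParam d) (mm nn : ℕ)
    (U : ((Fin d → ℝ) → ℝ) → ((Fin d → ℝ) → ℝ)) : Prop :=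
  ∃ L : List (ElemShift d ω mm nn), L.length ≤ 4 ^ d ∧
    ∀ f x, U f x = (L.map fun S => S.op volume f x).sum

/-- `U` is an ordinary (non-generalized) dyadic shift with parameters `mm`, `nn`:
a sum of at most `4^d` elementary dyadic shifts built from mean-zero Haar functions. -/
def IsOrdShiftOp {d : ℕ} (ω : TransParam d) (mm nn : ℕ)
    (U : ((Fin d → ℝ) → ℝ) → ((Fin d → ℝ) → ℝ)) : Prop :=
  ∃ L : List (ElemShift d ω mm nn), L.length ≤ 4 ^ d ∧ (∀ S ∈ L, S.Ordinary) ∧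
    ∀ f x, U f x = (L.map fun S => S.op volume f x).sum

/-- The dyadic paraproduct `Π f = Σ_Q (E_Q f) b_Q` with symbol `b = (b_Q)_Q = (Δ_Q T1)_Q`. -/
def paraOp {d : ℕ} (ω : TransParam d) (b : DyadicCube d → (Fin d → ℝ) → ℝ)
    (f : (Fin d → ℝ) → ℝ) : (Fin d → ℝ) → ℝ :=
  fun x => ∑' Q : DyadicCube d, DyadicCube.eproj ω volume Q f x * b Q x

/-- The adjoint `Π^*` of the dyadic paraproduct with symbol `b`:
`Π^* f = Σ_Q 1_Q |Q|⁻¹ ∫ f b_Q`. -/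
def paraOpAdj {d : ℕ} (ω : TransParam d) (b : DyadicCube d → (Fin d → ℝ) → ℝ)
    (f : (Fin d → ℝ) → ℝ) : (Fin d → ℝ) → ℝ :=
  fun x => ∑' Q : DyadicCube d,
    Set.indicator (Q.set ω) (fun _ => (1:ℝ)) x * (DyadicCube.vol Q)⁻¹ * (∫ y, f y * b Q y)

/-- `b = (b_Q)_Q` is the family `(Δ_Q T1)_Q` for the operator with adjoint `Tadj`:
each `b_Q` is supported on `Q`, constant on the children of `Q`, has mean zero, and
satisfies the duality relation `⟨b_Q, g⟩ = ⟨1, Tadj Δ_Q g⟩`. -/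
def IsParaSymbol {d : ℕ} (ω : TransParam d)
    (Tadj : ((Fin d → ℝ) → ℝ) → ((Fin d → ℝ) → ℝ))
    (b : DyadicCube d → (Fin d → ℝ) → ℝ) : Prop :=
  ∀ Q : DyadicCube d, IsGenHaar ω Q (b Q) ∧ (∫ x, b Q x) = 0 ∧
    ∀ g : (Fin d → ℝ) → ℝ, Measurable g → HasCompactSupport g → (∃ M, ∀ y, |g y| ≤ M) →
      (∫ x, b Q x * g x) = ∫ x, Tadj (DyadicCube.mdiff ω volume Q g) x

/-- `Tstar` is the adjoint of `T` on (unweighted) `L²`. -/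
def IsAdjointPair {d : ℕ} (T Tstar : ((Fin d → ℝ) → ℝ) → ((Fin d → ℝ) → ℝ)) : Prop :=
  ∀ f g : (Fin d → ℝ) → ℝ, MemLp f 2 volume → MemLp g 2 volume →
    (∫ x, T f x * g x) = ∫ x, f x * Tstar g x

/-- `T̃_ω = T - Π^ω_T - (Π^ω_{T*})^*`, where `b` plays the role of `(Δ_Q T1)_Q` and
`bstar` the role of `(Δ_Q T^*1)_Q`. -/
def tildeOp {d : ℕ} {Ccz α normT : ℝ} (Op : CZO d Ccz α normT) (ω : TransParam d)
    (b bstar : DyadicCube d → (Fin d → ℝ) → ℝ) (f : (Fin d → ℝ) → ℝ) : (Fin d → ℝ) → ℝ :=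
  fun x => Op.T f x - paraOp ω b f x - paraOpAdj ω bstar f x


namespace DyadicCube
variable {d : ℕ} (ω : TransParam d)

lemma summable_geo (k : ℤ) : Summable (fun j : {j : ℤ // j < k} => (2:ℝ) ^ (j.1 : ℤ)) := by
  let e : ℕ ≃ {j : ℤ // j < k} :=
    { toFun := fun n => ⟨k - 1 - n, by omega⟩
      invFun := fun j => (k - 1 - j.1).toNat
      left_inv := fun n => by simp
      right_inv := fun j => by
        have := j.2
        ext
        simp
        omega }
  rw [← e.summable_iff]
  have h2 : ((fun j : {j : ℤ // j < k} => (2:ℝ) ^ (j.1 : ℤ)) ∘ e) =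
      fun n : ℕ => (2:ℝ) ^ (k - 1) * (2⁻¹) ^ n := by
    funext n
    simp only [e, Function.comp_apply, Equiv.coe_fn_mk]
    rw [zpow_sub₀ (by norm_num : (2:ℝ) ≠ 0), zpow_natCast, div_eq_mul_inv, inv_pow]
  rw [h2]
  exact (summable_geometric_of_lt_one (by norm_num) (by norm_num)).mul_left _

lemma summable_shift_aux (i : Fin d) {s : Set ℤ} {k : ℤ}
    (hs : ∀ j ∈ s, j < k) :
    Summable ((fun j : ℤ => if ω j i then (2:ℝ) ^ j else 0) ∘ (Subtype.val : s → ℤ)) := by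
  apply Summable.of_nonneg_of_le
    (f := fun j : s => (2:ℝ) ^ (j.1 : ℤ))
  · intro j; dsimp [Function.comp]; split <;> positivity
  · intro j; dsimp [Function.comp]; split
    · exact le_refl _
    · positivity
  · have : Summable (fun j : {j : ℤ // j < k} => (2:ℝ) ^ (j.1 : ℤ)) := summable_geo k
    apply this.comp_injective (i := fun j : s => (⟨j.1, hs j.1 j.2⟩ : {j : ℤ // j < k}))
    intro a b hab
    ext
    simpa using hab

lemma shift_diff (i : Fin d) {k K : ℤ} (h : k ≤ K) :
    ∃ M : ℤ, shiftVec ω K i - shiftVec ω k i = (M : ℝ) * 2 ^ k := by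
  classical
  set f : ℤ → ℝ := fun j => if ω j i then (2:ℝ) ^ j else 0 with hf
  have hsetK : {j : ℤ | j < K} = {j : ℤ | j < k} ∪ Set.Ico k K := by
    ext j; simp [Set.mem_Ico]; omega
  have hdisj : Disjoint {j : ℤ | j < k} (Set.Ico k K) := by
    rw [Set.disjoint_left]; intro j hj hj'; exact absurd hj'.1 (by simpa using hj)
  have h1 : shiftVec ω K i = shiftVec ω k i + ∑' j : (Set.Ico k K), f j := by
    have h0 : shiftVec ω K i = ∑' j : ({j : ℤ | j < k} ∪ Set.Ico k K : Set ℤ), f j := by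
      rw [← hsetK]; rfl
    rw [h0, (summable_shift_aux ω i (fun j hj => hj)).tsum_union_disjoint hdisj
      (summable_shift_aux ω i (fun j hj => (Set.mem_Ico.mp hj).2.trans_le (le_refl K)))]
    rfl
  have h2 : ∑' j : (Set.Ico k K), f j = ∑ j ∈ Finset.Ico k K, f j := by
    rw [← Finset.coe_Ico, Finset.tsum_subtype']
  refine ⟨∑ j ∈ Finset.Ico k K, (if ω j i then 2 ^ (j - k).toNat else 0 : ℤ), ?_⟩
  rw [h1, h2]
  have h3 : ∑ j ∈ Finset.Ico k K, f j =
      ((∑ j ∈ Finset.Ico k K, (if ω j i then 2 ^ (j - k).toNat else 0 : ℤ) : ℤ) : ℝ) * 2 ^ k := by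
    push_cast
    rw [Finset.sum_mul]
    refine Finset.sum_congr rfl fun j hj => ?_
    simp only [hf]
    rw [Finset.mem_Ico] at hj
    split
    · rw [← zpow_natCast (2:ℝ) (j - k).toNat, Int.toNat_of_nonneg (by omega : (0:ℤ) ≤ j - k),
        ← zpow_add₀ (by norm_num : (2:ℝ) ≠ 0)]
      norm_num
    · simp
  rw [h3]
  ring

end DyadicCube

namespace DyadicCube
variable {d : ℕ} {ω : TransParam d}

/-- lower corner of the cube -/
def corner (ω : TransParam d) (Q : DyadicCube d) : Fin d → ℝ :=
  fun i => (Q.m i : ℝ) * 2 ^ Q.k + shiftVec ω Q.k i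

lemma corner_mem (Q : DyadicCube d) : corner ω Q ∈ Q.set ω := by
  intro i
  constructor
  · exact le_refl _
  · have : (0:ℝ) < 2 ^ Q.k := by positivity
    simp only [corner]
    nlinarith

lemma pow_diff {k K : ℤ} (h : k ≤ K) :
    (2:ℝ) ^ K = ((2 ^ (K - k).toNat : ℤ) : ℝ) * 2 ^ k := by
  push_cast
  rw [← zpow_natCast (2:ℝ) (K - k).toNat, Int.toNat_of_nonneg (by omega : (0:ℤ) ≤ K - k),
    ← zpow_add₀ (by norm_num : (2:ℝ) ≠ 0)]
  norm_num

lemma exists_offset {Q R : DyadicCube d} (hk : Q.k ≤ R.k) (i : Fin d) :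
    ∃ L : ℤ, ((R.m i : ℝ) * 2 ^ R.k + shiftVec ω R.k i)
      - ((Q.m i : ℝ) * 2 ^ Q.k + shiftVec ω Q.k i) = (L : ℝ) * 2 ^ Q.k := by
  obtain ⟨M, hM⟩ := shift_diff ω i hk
  refine ⟨R.m i * 2 ^ (R.k - Q.k).toNat - Q.m i + M, ?_⟩
  have hp := pow_diff hk
  push_cast
  rw [show ((R.m i : ℝ) * 2 ^ R.k + shiftVec ω R.k i)
      - ((Q.m i : ℝ) * 2 ^ Q.k + shiftVec ω Q.k i)
      = (R.m i : ℝ) * 2 ^ R.k - (Q.m i : ℝ) * 2 ^ Q.k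
        + (shiftVec ω R.k i - shiftVec ω Q.k i) by ring, hM, hp]
  push_cast
  ring

lemma subset_of_mem_inter {Q R : DyadicCube d} (hk : Q.k ≤ R.k) {x : Fin d → ℝ}
    (hxQ : x ∈ Q.set ω) (hxR : x ∈ R.set ω) : Q.set ω ⊆ R.set ω := by
  intro y hy i
  obtain ⟨L, hL⟩ := exists_offset (ω := ω) hk i
  set A := (Q.m i : ℝ) * 2 ^ Q.k + shiftVec ω Q.k i with hA
  set B := (R.m i : ℝ) * 2 ^ R.k + shiftVec ω R.k i with hB
  have ht : (0:ℝ) < 2 ^ Q.k := by positivity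
  have hpow := pow_diff hk
  set N : ℤ := 2 ^ (R.k - Q.k).toNat with hN
  have hN1 : (1:ℤ) ≤ N := by rw [hN]; exact one_le_pow₀ (by norm_num)
  have hxQ1 := (hxQ i).1
  have hxQ2 := (hxQ i).2
  have hxR1 := (hxR i).1
  have hxR2 := (hxR i).2
  rw [← hA] at hxQ1
  have hxQ2' : x i < A + 2 ^ Q.k := by rw [hA]; push_cast at hxQ2 ⊢; linarith [hxQ2]
  rw [← hB] at hxR1
  have hxR2' : x i < B + 2 ^ R.k := by rw [hB]; push_cast at hxR2 ⊢; linarith [hxR2]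
  -- L ≤ 0
  have hL0 : L ≤ 0 := by
    by_contra hc
    push_neg at hc
    have : (1:ℝ) ≤ (L:ℝ) := by exact_mod_cast hc
    nlinarith
  have hLN : (1:ℝ) - (L:ℝ) ≤ (N:ℝ) := by
    have h1 : A - B < 2 ^ R.k := by linarith
    rw [hpow] at h1
    have : -(L:ℝ) * 2 ^ Q.k < (N:ℝ) * 2 ^ Q.k := by nlinarith
    have h2 : -L < N := by
      have := (mul_lt_mul_iff_left₀ ht).mp this
      exact_mod_cast this
    have : 1 - L ≤ N := by omega
    exact_mod_cast this
  have hyQ1 := (hy i).1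
  have hyQ2 := (hy i).2
  rw [← hA] at hyQ1
  have hyQ2' : y i < A + 2 ^ Q.k := by rw [hA]; push_cast at hyQ2 ⊢; linarith [hyQ2]
  have hL0' : (L:ℝ) * 2 ^ Q.k ≤ 0 :=
    mul_nonpos_of_nonpos_of_nonneg (by exact_mod_cast hL0) ht.le
  constructor
  · show B ≤ y i
    linarith
  · have : ((1:ℝ) - L) * 2 ^ Q.k ≤ (N:ℝ) * 2 ^ Q.k :=
      mul_le_mul_of_nonneg_right hLN ht.le
    have hBe : B + (2:ℝ) ^ R.k = ((R.m i : ℝ) + 1) * 2 ^ R.k + shiftVec ω R.k i := by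
      rw [hB]; ring
    show y i < ((R.m i : ℝ) + 1) * 2 ^ R.k + shiftVec ω R.k i
    rw [← hBe, hpow]
    nlinarith

lemma nested_or_disjoint (Q R : DyadicCube d) :
    Q.set ω ⊆ R.set ω ∨ R.set ω ⊆ Q.set ω ∨ Disjoint (Q.set ω) (R.set ω) := by
  by_cases hint : Disjoint (Q.set ω) (R.set ω)
  · exact Or.inr (Or.inr hint)
  · rw [Set.not_disjoint_iff] at hint
    obtain ⟨x, hxQ, hxR⟩ := hint
    rcases le_total Q.k R.k with h | h
    · exact Or.inl (subset_of_mem_inter h hxQ hxR)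
    · exact Or.inr (Or.inl (subset_of_mem_inter h hxR hxQ))

lemma coord_subset {Q R : DyadicCube d} (h : Q.set ω ⊆ R.set ω) (i : Fin d) :
    corner ω R i ≤ corner ω Q i ∧
    corner ω Q i + 2 ^ Q.k ≤ corner ω R i + 2 ^ R.k ∧
    (2:ℝ) ^ Q.k ≤ 2 ^ R.k := by
  have claim : ∀ t : ℝ, corner ω Q i ≤ t → t < corner ω Q i + 2 ^ Q.k →
      corner ω R i ≤ t ∧ t < corner ω R i + 2 ^ R.k := by
    intro t ht1 ht2
    have hz : Function.update (corner ω Q) i t ∈ Q.set ω := by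
      intro j
      by_cases hj : j = i
      · subst hj
        rw [Function.update_self]
        refine ⟨ht1, ?_⟩
        have : corner ω Q j + 2 ^ Q.k = ((Q.m j : ℝ) + 1) * 2 ^ Q.k + shiftVec ω Q.k j := by
          simp only [corner]; ring
        rw [← this]; exact ht2
      · rw [Function.update_of_ne hj]
        exact corner_mem Q j
    have := h hz i
    rw [Function.update_self] at this
    refine ⟨this.1, ?_⟩
    have heq : ((R.m i : ℝ) + 1) * 2 ^ R.k + shiftVec ω R.k i = corner ω R i + 2 ^ R.k := by
      simp only [corner]; ring
    rw [← heq]; exact this.2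
  have h2k : (0:ℝ) < 2 ^ Q.k := by positivity
  have base := claim (corner ω Q i) (le_refl _) (by linarith)
  have hsum : corner ω Q i + 2 ^ Q.k ≤ corner ω R i + 2 ^ R.k := by
    by_contra hc
    push_neg at hc
    have := claim (corner ω R i + 2 ^ R.k) (by linarith [base.2]) hc
    linarith [this.2]
  exact ⟨base.1, hsum, by linarith [base.1]⟩

lemma k_le_of_subset (hd : 0 < d) {Q R : DyadicCube d} (h : Q.set ω ⊆ R.set ω) :
    Q.k ≤ R.k := by
  have := (coord_subset h ⟨0, hd⟩).2.2
  exact_mod_cast (zpow_le_zpow_iff_right₀ (by norm_num : (1:ℝ) < 2)).mp this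

lemma set_injective (hd : 0 < d) {Q R : DyadicCube d} (h : Q.set ω = R.set ω) : Q = R := by
  have hQR : Q.set ω ⊆ R.set ω := h.le
  have hRQ : R.set ω ⊆ Q.set ω := h.ge
  have hk : Q.k = R.k := le_antisymm (k_le_of_subset hd hQR) (k_le_of_subset hd hRQ)
  have hm : ∀ i, Q.m i = R.m i := by
    intro i
    have h1 := (coord_subset hQR i).1
    have h2 := (coord_subset hRQ i).1
    have hcor : corner ω Q i = corner ω R i := le_antisymm h2 h1
    simp only [corner, hk] at hcor
    have h2k : (2:ℝ) ^ R.k ≠ 0 := by positivity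
    have hmul : (Q.m i : ℝ) * 2 ^ R.k = (R.m i : ℝ) * 2 ^ R.k := by linarith
    exact_mod_cast mul_right_cancel₀ h2k hmul
  cases Q with
  | mk k m =>
    cases R with
    | mk k' m' =>
      simp only [mk.injEq]
      exact ⟨hk, funext hm⟩


lemma set_eq_pi (Q : DyadicCube d) :
    Q.set ω = Set.pi Set.univ (fun i => Set.Ico (corner ω Q i) (corner ω Q i + 2 ^ Q.k)) := by
  ext x
  simp only [Set.mem_pi, Set.mem_univ, forall_true_left, Set.mem_Ico]
  constructor
  · intro hx i
    refine ⟨(hx i).1, ?_⟩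
    have := (hx i).2
    simp only [corner]
    linarith [this]
  · intro hx i
    refine ⟨(hx i).1, ?_⟩
    have := (hx i).2
    simp only [corner] at this
    linarith [this]

lemma measurableSet_set (Q : DyadicCube d) : MeasurableSet (Q.set ω) := by
  rw [set_eq_pi]
  exact MeasurableSet.univ_pi (fun i => measurableSet_Ico)

lemma volume_set (Q : DyadicCube d) : volume (Q.set ω) = ENNReal.ofReal Q.vol := by
  rw [set_eq_pi, volume_pi_pi]
  have h2k : (0:ℝ) ≤ 2 ^ Q.k := by positivity
  simp only [Real.volume_Ico, add_sub_cancel_left]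
  rw [Finset.prod_const, Finset.card_univ, Fintype.card_fin, vol,
    ← ENNReal.ofReal_pow h2k]

lemma vol_pos (Q : DyadicCube d) : 0 < Q.vol := by
  rw [vol]; positivity

lemma isCompact_closure_box (Q : DyadicCube d) :
    IsCompact (Set.pi Set.univ (fun i => Set.Icc (corner ω Q i) (corner ω Q i + 2 ^ Q.k))) :=
  isCompact_univ_pi (fun i => isCompact_Icc)

lemma set_subset_box (Q : DyadicCube d) :
    Q.set ω ⊆ Set.pi Set.univ (fun i => Set.Icc (corner ω Q i) (corner ω Q i + 2 ^ Q.k)) := by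
  rw [set_eq_pi]
  exact Set.pi_mono (fun i _ => Set.Ico_subset_Icc_self)

end DyadicCube

section Meas
variable {d : ℕ} {ω : TransParam d} {w : (Fin d → ℝ) → ℝ}

lemma integrableOn_cube (hwl : LocallyIntegrable w volume) (Q : DyadicCube d) :
    IntegrableOn w (Q.set ω) volume :=
  (hwl.integrableOn_isCompact (DyadicCube.isCompact_closure_box (ω := ω) Q)).mono_set
    (DyadicCube.set_subset_box Q)

lemma lint_lt_top (hwl : LocallyIntegrable w volume) (Q : DyadicCube d) :
    ∫⁻ x in Q.set ω, ENNReal.ofReal (w x) < ⊤ :=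
  (integrableOn_cube hwl Q).lintegral_lt_top

lemma lint_pos (hwpos : ∀ᵐ x : Fin d → ℝ, 0 < w x) (hwl : LocallyIntegrable w volume)
    (Q : DyadicCube d) : 0 < ∫⁻ x in Q.set ω, ENNReal.ofReal (w x) := by
  rcases eq_zero_or_pos (∫⁻ x in Q.set ω, ENNReal.ofReal (w x)) with h0 | h
  · exfalso
    have haem : AEMeasurable (fun x => ENNReal.ofReal (w x)) (volume.restrict (Q.set ω)) :=
      (ENNReal.measurable_ofReal.comp_aemeasurable
        hwl.aestronglyMeasurable.aemeasurable).restrict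
    have hz := (lintegral_eq_zero_iff' haem).mp h0
    have hpos' : ∀ᵐ x ∂(volume.restrict (Q.set ω)), 0 < w x := ae_restrict_of_ae hwpos
    have : ∀ᵐ x ∂(volume.restrict (Q.set ω)), False := by
      filter_upwards [hz, hpos'] with x h1 h2
      simp only [Pi.zero_apply, ENNReal.ofReal_eq_zero] at h1
      linarith
    have : (volume.restrict (Q.set ω)) Set.univ = 0 := by
      simpa using this
    rw [Measure.restrict_apply_univ, DyadicCube.volume_set] at this
    have := DyadicCube.vol_pos Q
    simp [ENNReal.ofReal_eq_zero] at *
    linarith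
  · exact h

lemma integral_cube_eq (hwpos : ∀ᵐ x : Fin d → ℝ, 0 < w x)
    (hwl : LocallyIntegrable w volume) (Q : DyadicCube d) :
    ∫ x in Q.set ω, w x = (∫⁻ x in Q.set ω, ENNReal.ofReal (w x)).toReal := by
  apply integral_eq_lintegral_of_nonneg_ae
  · exact ae_restrict_of_ae (hwpos.mono fun x hx => hx.le)
  · exact hwl.aestronglyMeasurable.restrict

/-- Cauchy–Schwarz: `volume S * volume S ≤ (∫_S w)(∫_S w⁻¹)`. -/
lemma cs_ineq (hwpos : ∀ᵐ x : Fin d → ℝ, 0 < w x)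
    (hw : AEMeasurable w volume) {S : Set (Fin d → ℝ)} (hS : MeasurableSet S) :
    volume S * volume S ≤
      (∫⁻ x in S, ENNReal.ofReal (w x)) * (∫⁻ x in S, ENNReal.ofReal ((w x)⁻¹)) := by
  set μS := volume.restrict S with hμS
  set f : (Fin d → ℝ) → ℝ≥0∞ := fun x => (ENNReal.ofReal (w x)) ^ (1/2 : ℝ) with hf
  set g : (Fin d → ℝ) → ℝ≥0∞ := fun x => (ENNReal.ofReal ((w x)⁻¹)) ^ (1/2 : ℝ) with hg
  have hfm : AEMeasurable f μS :=
    ((ENNReal.measurable_ofReal.comp_aemeasurable hw).pow_const _).restrict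
  have hgm : AEMeasurable g μS :=
    ((ENNReal.measurable_ofReal.comp_aemeasurable hw.inv).pow_const _).restrict
  have hone : ∀ᵐ x ∂μS, (f * g) x = 1 := by
    filter_upwards [ae_restrict_of_ae hwpos] with x hx
    simp only [Pi.mul_apply, hf, hg]
    rw [← ENNReal.mul_rpow_of_nonneg _ _ (by norm_num : (0:ℝ) ≤ 1/2),
      ← ENNReal.ofReal_mul hx.le, mul_inv_cancel₀ hx.ne', ENNReal.ofReal_one,
      ENNReal.one_rpow]
  have hμ : μS Set.univ = volume S := by rw [hμS, Measure.restrict_apply_univ]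
  have hls : volume S = ∫⁻ x, (f * g) x ∂μS := by
    rw [lintegral_congr_ae hone, lintegral_one, hμ]
  have hcs := ENNReal.lintegral_mul_le_Lp_mul_Lq μS
    Real.HolderConjugate.two_two hfm hgm
  have hsq : ∀ a : ℝ≥0∞, (a ^ (1/2:ℝ)) ^ (2:ℝ) = a := by
    intro a
    rw [← ENNReal.rpow_mul]
    norm_num
  have hf2 : ∫⁻ x, f x ^ (2:ℝ) ∂μS = ∫⁻ x in S, ENNReal.ofReal (w x) := by
    refine lintegral_congr fun x => ?_
    rw [hf]; exact hsq _
  have hg2 : ∫⁻ x, g x ^ (2:ℝ) ∂μS = ∫⁻ x in S, ENNReal.ofReal ((w x)⁻¹) := by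
    refine lintegral_congr fun x => ?_
    rw [hg]; exact hsq _
  set a := ∫⁻ x in S, ENNReal.ofReal (w x) with ha
  set b := ∫⁻ x in S, ENNReal.ofReal ((w x)⁻¹) with hb
  have h1 : volume S ≤ a ^ (1/2:ℝ) * b ^ (1/2:ℝ) := by
    rw [hls]
    refine hcs.trans_eq ?_
    rw [hf2, hg2]
  have hhalf : ∀ c : ℝ≥0∞, c ^ (1/2:ℝ) * c ^ (1/2:ℝ) = c := by
    intro c
    rw [← ENNReal.rpow_add_of_nonneg (1/2) (1/2) (by norm_num) (by norm_num)]
    norm_num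
  calc volume S * volume S ≤ (a ^ (1/2:ℝ) * b ^ (1/2:ℝ)) * (a ^ (1/2:ℝ) * b ^ (1/2:ℝ)) :=
        mul_le_mul' h1 h1
    _ = (a ^ (1/2:ℝ) * a ^ (1/2:ℝ)) * (b ^ (1/2:ℝ) * b ^ (1/2:ℝ)) := by ring
    _ = a * b := by rw [hhalf, hhalf]

end Meas

instance {d : ℕ} : Countable (DyadicCube d) :=
  Function.Injective.countable (f := fun Q : DyadicCube d => (Q.k, Q.m))
    (fun a b h => by cases a; cases b; simpa using h)

section Comb
variable {d : ℕ} {ω : TransParam d} {w : (Fin d → ℝ) → ℝ} {𝒬 : Set (DyadicCube d)}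
  {Q₀ : DyadicCube d}

lemma stopGen_subset (τ : ℕ) (Q : DyadicCube d) (hQ : Q ∈ stopGen ω w 𝒬 Q₀ τ) :
    Q.set ω ⊆ Q₀.set ω := by
  induction τ generalizing Q with
  | zero => simp only [stopGen, Set.mem_singleton_iff] at hQ; subst hQ; exact subset_rfl
  | succ τ ih =>
    obtain ⟨P, hP, hQP⟩ := hQ
    exact hQP.1.2.1.trans (ih P hP)

lemma lemB (hd : 0 < d) :
    ∀ n τ s : ℕ, τ + s ≤ n → ∀ Q P : DyadicCube d,
    Q ∈ stopGen ω w 𝒬 Q₀ τ → P ∈ stopGen ω w 𝒬 Q₀ s → Q.set ω ⊆ P.set ω →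
    Q = P ∨ (∃ C ∈ stopNext ω w 𝒬 P, Q.set ω ⊆ C.set ω) := by
  intro n
  induction n with
  | zero =>
    intro τ s hτs Q P hQ hP hQP
    obtain ⟨rfl, rfl⟩ : τ = 0 ∧ s = 0 := by omega
    simp only [stopGen, Set.mem_singleton_iff] at hQ hP
    subst hQ; subst hP
    exact Or.inl rfl
  | succ n ih =>
    intro τ s hτs Q P hQ hP hQP
    match τ with
    | 0 =>
      simp only [stopGen, Set.mem_singleton_iff] at hQ
      subst hQ
      left
      exact (DyadicCube.set_injective hd
        (le_antisymm hQP (stopGen_subset s P hP))).symm ▸ rfl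
    | τ' + 1 =>
      obtain ⟨P', hP', hQN⟩ := hQ
      have hQP' : Q.set ω ⊆ P'.set ω := hQN.1.2.1
      have hne : (Q.set ω).Nonempty := ⟨DyadicCube.corner ω Q, DyadicCube.corner_mem Q⟩
      rcases DyadicCube.nested_or_disjoint P' P with h1 | h1 | h1
      · rcases ih τ' s (by omega) P' P hP' hP h1 with rfl | ⟨C, hC, hPC⟩
        · exact Or.inr ⟨Q, hQN, subset_rfl⟩
        · exact Or.inr ⟨C, hC, hQP'.trans hPC⟩
      · rcases ih s τ' (by omega) P P' hP hP' h1 with rfl | ⟨C, hC, hPC⟩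
        · exact Or.inr ⟨Q, hQN, subset_rfl⟩
        · have hCQ : C.set ω ⊆ Q.set ω :=
            hQN.2 C hC.1.1 hC.1.2.1 hC.1.2.2 (hQP.trans hPC)
          exact Or.inl (DyadicCube.set_injective hd
            (le_antisymm hQP (hPC.trans hCQ)))
      · obtain ⟨x, hx⟩ := hne
        exact absurd ((h1 hQP' hQP) hx) (Set.notMem_empty x)

lemma stopFam_lemB (hd : 0 < d) {Q P : DyadicCube d}
    (hQ : Q ∈ stopFam ω w 𝒬 Q₀) (hP : P ∈ stopFam ω w 𝒬 Q₀)
    (hQP : Q.set ω ⊆ P.set ω) :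
    Q = P ∨ (∃ C ∈ stopNext ω w 𝒬 P, Q.set ω ⊆ C.set ω) := by
  obtain ⟨_, ⟨τ, rfl⟩, hQτ⟩ := hQ
  obtain ⟨_, ⟨s, rfl⟩, hPs⟩ := hP
  exact lemB hd (τ + s) τ s le_rfl Q P hQτ hPs hQP

lemma stopNext_pairwise (hd : 0 < d) (Q : DyadicCube d) :
    Pairwise (Function.onFun Disjoint fun C : stopNext ω w 𝒬 Q => (C : DyadicCube d).set ω) := by
  intro C₁ C₂ hne
  rcases DyadicCube.nested_or_disjoint (C₁ : DyadicCube d) (C₂ : DyadicCube d)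
    with h | h | h
  · exfalso
    have := C₁.2.2 (C₂ : DyadicCube d) C₂.2.1.1 C₂.2.1.2.1 C₂.2.1.2.2 h
    exact hne (Subtype.ext (DyadicCube.set_injective hd (le_antisymm h this)))
  · exfalso
    have := C₂.2.2 (C₁ : DyadicCube d) C₁.2.1.1 C₁.2.1.2.1 C₁.2.1.2.2 h
    exact hne (Subtype.ext (DyadicCube.set_injective hd (le_antisymm this h)))
  · exact h

end Comb

namespace DyadicCube

lemma set_eq_stdCube {d : ℕ} (ω : TransParam d) (Q : DyadicCube d) :
    Q.set ω = stdCube (corner ω Q) (2 ^ Q.k) := by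
  ext x
  constructor
  · intro hx i
    refine ⟨(hx i).1, ?_⟩
    have := (hx i).2
    simp only [corner]
    linarith [this]
  · intro hx i
    refine ⟨(hx i).1, ?_⟩
    have := (hx i).2
    simp only [corner] at this
    linarith [this]

end DyadicCube

section Main
variable {d : ℕ} {ω : TransParam d} {w : (Fin d → ℝ) → ℝ} {A : ℝ} {𝒬 : Set (DyadicCube d)}
  {Q₀ : DyadicCube d}

lemma dens_lt_mul (hwpos : ∀ᵐ x : Fin d → ℝ, 0 < w x) (hwl : LocallyIntegrable w volume)
    {Q C : DyadicCube d} (h : 4 * dens ω w Q < dens ω w C) :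
    4 * (∫⁻ x in Q.set ω, ENNReal.ofReal (w x)) * volume (C.set ω) ≤
      (∫⁻ x in C.set ω, ENNReal.ofReal (w x)) * volume (Q.set ω) := by
  set νQ := ∫⁻ x in Q.set ω, ENNReal.ofReal (w x) with hνQ
  set νC := ∫⁻ x in C.set ω, ENNReal.ofReal (w x) with hνC
  have hreal : 4 * νQ.toReal * C.vol ≤ νC.toReal * Q.vol := by
    rw [dens, dens, integral_cube_eq hwpos hwl, integral_cube_eq hwpos hwl,
      ← hνQ, ← hνC, mul_div_assoc'] at h
    exact ((div_lt_div_iff₀ (DyadicCube.vol_pos Q) (DyadicCube.vol_pos C)).mp h).le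
  have hQfin : νQ ≠ ⊤ := by rw [hνQ]; exact (lint_lt_top hwl Q).ne
  have hCfin : νC ≠ ⊤ := by rw [hνC]; exact (lint_lt_top hwl C).ne
  calc 4 * νQ * volume (C.set ω)
      = ENNReal.ofReal (4 * νQ.toReal * C.vol) := by
        rw [DyadicCube.volume_set, ENNReal.ofReal_mul (by positivity),
          ENNReal.ofReal_mul (by norm_num : (0:ℝ) ≤ 4), ENNReal.ofReal_toReal hQfin,
          ENNReal.ofReal_ofNat]
    _ ≤ ENNReal.ofReal (νC.toReal * Q.vol) := ENNReal.ofReal_le_ofReal hreal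
    _ = νC * volume (Q.set ω) := by
        rw [DyadicCube.volume_set, ENNReal.ofReal_mul ENNReal.toReal_nonneg,
          ENNReal.ofReal_toReal hCfin]

/-- The exceptional-set part of a cube. -/
def stopE (ω : TransParam d) (w : (Fin d → ℝ) → ℝ) (𝒬 : Set (DyadicCube d))
    (Q : DyadicCube d) : Set (Fin d → ℝ) :=
  Q.set ω \ ⋃ C : stopNext ω w 𝒬 Q, (C : DyadicCube d).set ω

lemma measurableSet_stopE (Q : DyadicCube d) : MeasurableSet (stopE ω w 𝒬 Q) :=
  (DyadicCube.measurableSet_set Q).diff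
    (MeasurableSet.iUnion fun C => DyadicCube.measurableSet_set _)

lemma percube (hd : 0 < d) (hwpos : ∀ᵐ x : Fin d → ℝ, 0 < w x)
    (hwl : LocallyIntegrable w volume) (hA2 : A2BoundOn w A) (Q : DyadicCube d) :
    (9:ℝ≥0∞) * ∫⁻ x in Q.set ω, ENNReal.ofReal (w x) ≤
      16 * ENNReal.ofReal A * ∫⁻ x in stopE ω w 𝒬 Q, ENNReal.ofReal (w x) := by
  have hw : AEMeasurable w volume := hwl.aestronglyMeasurable.aemeasurable
  set νQ := ∫⁻ x in Q.set ω, ENNReal.ofReal (w x) with hνQdef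
  set σQ := ∫⁻ x in Q.set ω, ENNReal.ofReal ((w x)⁻¹) with hσQdef
  set μQ := volume (Q.set ω) with hμQdef
  set E := stopE ω w 𝒬 Q with hEdef
  set νE := ∫⁻ x in E, ENNReal.ofReal (w x) with hνEdef
  set σE := ∫⁻ x in E, ENNReal.ofReal ((w x)⁻¹) with hσEdef
  have hμQvol : μQ = ENNReal.ofReal Q.vol := DyadicCube.volume_set Q
  have hμQ0 : μQ ≠ 0 := by
    rw [hμQvol]
    simp only [ne_eq, ENNReal.ofReal_eq_zero, not_le]
    exact DyadicCube.vol_pos Q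
  have hμQt : μQ ≠ ⊤ := by rw [hμQvol]; exact ENNReal.ofReal_ne_top
  have hνQ0 : νQ ≠ 0 := (lint_pos hwpos hwl Q).ne'
  have hνQt : νQ ≠ ⊤ := (lint_lt_top hwl Q).ne
  -- children measure bound
  have hsumnu : ∑' C : stopNext ω w 𝒬 Q, (∫⁻ x in (C : DyadicCube d).set ω, ENNReal.ofReal (w x))
      ≤ νQ := by
    rw [← lintegral_iUnion (fun C => DyadicCube.measurableSet_set _) (stopNext_pairwise hd Q)]
    exact lintegral_mono_set (Set.iUnion_subset fun C => C.2.1.2.1)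
  have hkey : νQ * (4 * ∑' C : stopNext ω w 𝒬 Q, volume ((C : DyadicCube d).set ω)) ≤
      νQ * μQ := by
    calc νQ * (4 * ∑' C : stopNext ω w 𝒬 Q, volume ((C : DyadicCube d).set ω))
        = ∑' C : stopNext ω w 𝒬 Q, 4 * νQ * volume ((C : DyadicCube d).set ω) := by
          rw [ENNReal.tsum_mul_left (a := 4 * νQ)]; ring
      _ ≤ ∑' C : stopNext ω w 𝒬 Q,
            (∫⁻ x in (C : DyadicCube d).set ω, ENNReal.ofReal (w x)) * μQ :=
          ENNReal.tsum_le_tsum fun C => dens_lt_mul hwpos hwl C.2.1.2.2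
      _ = (∑' C : stopNext ω w 𝒬 Q,
            (∫⁻ x in (C : DyadicCube d).set ω, ENNReal.ofReal (w x))) * μQ :=
          ENNReal.tsum_mul_right
      _ ≤ νQ * μQ := mul_le_mul_left hsumnu μQ
  have h4sum : 4 * (∑' C : stopNext ω w 𝒬 Q, volume ((C : DyadicCube d).set ω)) ≤ μQ :=
    (ENNReal.mul_le_mul_iff_right hνQ0 hνQt).mp hkey
  -- E covers 3/4
  have hcover : μQ ≤ volume E + ∑' C : stopNext ω w 𝒬 Q, volume ((C : DyadicCube d).set ω) := by
    have h1 : Q.set ω ⊆ E ∪ ⋃ C : stopNext ω w 𝒬 Q, (C : DyadicCube d).set ω := by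
      intro x hx
      by_cases hxU : x ∈ ⋃ C : stopNext ω w 𝒬 Q, (C : DyadicCube d).set ω
      · exact Or.inr hxU
      · exact Or.inl ⟨hx, hxU⟩
    calc μQ ≤ volume (E ∪ ⋃ C : stopNext ω w 𝒬 Q, (C : DyadicCube d).set ω) :=
          measure_mono h1
      _ ≤ volume E + volume (⋃ C : stopNext ω w 𝒬 Q, (C : DyadicCube d).set ω) :=
          measure_union_le _ _
      _ ≤ volume E + ∑' C : stopNext ω w 𝒬 Q, volume ((C : DyadicCube d).set ω) :=
          add_le_add_right (measure_iUnion_le _) _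
  have h3μ : 3 * μQ ≤ 4 * volume E := by
    have h1 : 3 * μQ + μQ ≤ 4 * volume E + μQ := by
      calc 3 * μQ + μQ = 4 * μQ := by ring
        _ ≤ 4 * (volume E + ∑' C : stopNext ω w 𝒬 Q, volume ((C : DyadicCube d).set ω)) :=
          mul_le_mul_right hcover 4
        _ = 4 * volume E + 4 * ∑' C : stopNext ω w 𝒬 Q, volume ((C : DyadicCube d).set ω) := by
          ring
        _ ≤ 4 * volume E + μQ := add_le_add_right h4sum _
    exact (WithTop.add_le_add_iff_right hμQt).mp h1
  have hcsE : volume E * volume E ≤ νE * σE := cs_ineq hwpos hw (measurableSet_stopE Q)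
  have hσEQ : σE ≤ σQ := lintegral_mono_set Set.diff_subset
  have hA2Q : νQ * σQ ≤ ENNReal.ofReal A * μQ * μQ := by
    have h := hA2 (DyadicCube.corner ω Q) (2 ^ Q.k) (by positivity)
    rw [← DyadicCube.set_eq_stdCube] at h
    rw [hμQvol]
    exact h
  have step1 : (9:ℝ≥0∞) * (μQ * μQ) ≤ 16 * (νE * σQ) := by
    calc (9:ℝ≥0∞) * (μQ * μQ) = (3 * μQ) * (3 * μQ) := by ring
      _ ≤ (4 * volume E) * (4 * volume E) := mul_le_mul' h3μ h3μ
      _ = 16 * (volume E * volume E) := by ring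
      _ ≤ 16 * (νE * σE) := mul_le_mul_right hcsE _
      _ ≤ 16 * (νE * σQ) := mul_le_mul_right (mul_le_mul_right hσEQ νE) 16
  have step2 : μQ * (μQ * ((9:ℝ≥0∞) * νQ)) ≤ μQ * (μQ * (16 * ENNReal.ofReal A * νE)) := by
    calc μQ * (μQ * ((9:ℝ≥0∞) * νQ)) = ((9:ℝ≥0∞) * (μQ * μQ)) * νQ := by ring
      _ ≤ (16 * (νE * σQ)) * νQ := mul_le_mul_left step1 νQ
      _ = 16 * νE * (νQ * σQ) := by ring
      _ ≤ 16 * νE * (ENNReal.ofReal A * μQ * μQ) := mul_le_mul_right hA2Q _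
      _ = μQ * (μQ * (16 * ENNReal.ofReal A * νE)) := by ring
  exact (ENNReal.mul_le_mul_iff_right hμQ0 hμQt).mp ((ENNReal.mul_le_mul_iff_right hμQ0 hμQt).mp step2)

end Main


set_option maxHeartbeats 1000000 in
/-- **weighted Carleson property of the stopping cubes, Lemma 5.3.** For an
`A₂` weight `w` and the stopping family `𝒢* = 𝒢*(Q₀)`, one has
`Σ_{Q∈𝒢*, Q⊆R} w(Q) ≤ (16/3) [w]_{A₂} w(R)` for every `R ∈ 𝒟`. -/
theorem statement17 (d : ℕ) (hd : 0 < d) (ω : TransParam d)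
    (w : (Fin d → ℝ) → ℝ) (A : ℝ) (hA : 0 ≤ A)
    (hwpos : ∀ᵐ x : Fin d → ℝ, 0 < w x) (hwl : LocallyIntegrable w volume)
    (hwl' : LocallyIntegrable (fun x => (w x)⁻¹) volume)
    (hA2 : A2BoundOn w A)
    (𝒬 : Set (DyadicCube d)) (Q₀ : DyadicCube d) (hQ₀ : Q₀ ∈ 𝒬) :
    ∀ R : DyadicCube d,
      (∑' Q : {Q : DyadicCube d // Q ∈ stopFam ω w 𝒬 Q₀ ∧ Q.set ω ⊆ R.set ω},
        ∫⁻ x in (Q.1).set ω, ENNReal.ofReal (w x)) ≤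
        ENNReal.ofReal ((16 / 3) * A) * ∫⁻ x in R.set ω, ENNReal.ofReal (w x) := by
  intro R
  set FT := {Q : DyadicCube d // Q ∈ stopFam ω w 𝒬 Q₀ ∧ Q.set ω ⊆ R.set ω} with hFT
  -- the exceptional sets are pairwise disjoint
  have hdisj : Pairwise (Function.onFun Disjoint fun q : FT => stopE ω w 𝒬 q.1) := by
    intro q q' hne
    have hv : q.1 ≠ q'.1 := fun h => hne (Subtype.ext h)
    have key : ∀ a b : DyadicCube d, a ∈ stopFam ω w 𝒬 Q₀ → b ∈ stopFam ω w 𝒬 Q₀ →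
        a ≠ b → a.set ω ⊆ b.set ω → Disjoint (stopE ω w 𝒬 a) (stopE ω w 𝒬 b) := by
      intro a b ha hb hab hsub
      rcases stopFam_lemB hd ha hb hsub with heq | ⟨C, hC, hsubC⟩
      · exact absurd heq hab
      · rw [Set.disjoint_left]
        intro x hxa hxb
        have hxC : x ∈ (C : DyadicCube d).set ω := hsubC hxa.1
        exact hxb.2 (Set.mem_iUnion.mpr ⟨⟨C, hC⟩, hxC⟩)
    rcases DyadicCube.nested_or_disjoint q.1 q'.1 with h | h | h
    · exact key q.1 q'.1 q.2.1 q'.2.1 hv h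
    · exact (key q'.1 q.1 q'.2.1 q.2.1 hv.symm h).symm
    · exact Set.disjoint_of_subset Set.diff_subset Set.diff_subset h
  have hperq : ∀ q : FT, (9:ℝ≥0∞) * ∫⁻ x in (q.1).set ω, ENNReal.ofReal (w x) ≤
      16 * ENNReal.ofReal A * ∫⁻ x in stopE ω w 𝒬 q.1, ENNReal.ofReal (w x) := by
    intro q
    exact percube hd hwpos hwl hA2 q.1
  have h9 : (9:ℝ≥0∞) * ∑' q : FT, ∫⁻ x in (q.1).set ω, ENNReal.ofReal (w x) ≤
      16 * ENNReal.ofReal A * ∑' q : FT, ∫⁻ x in stopE ω w 𝒬 q.1, ENNReal.ofReal (w x) := by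
    rw [← ENNReal.tsum_mul_left, ← ENNReal.tsum_mul_left]
    exact ENNReal.tsum_le_tsum hperq
  have hsumE : ∑' q : FT, ∫⁻ x in stopE ω w 𝒬 q.1, ENNReal.ofReal (w x) ≤
      ∫⁻ x in R.set ω, ENNReal.ofReal (w x) := by
    have heq := lintegral_iUnion (μ := volume) (s := fun q : FT => stopE ω w 𝒬 q.1)
      (fun q => measurableSet_stopE q.1) hdisj (fun x => ENNReal.ofReal (w x))
    rw [← heq]
    exact lintegral_mono_set
      (Set.iUnion_subset fun q => Set.diff_subset.trans q.2.2)
  have h9' : (9:ℝ≥0∞) * ∑' q : FT, ∫⁻ x in (q.1).set ω, ENNReal.ofReal (w x) ≤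
      16 * ENNReal.ofReal A * ∫⁻ x in R.set ω, ENNReal.ofReal (w x) :=
    h9.trans (mul_le_mul_right hsumE _)
  have hfinal : ∑' q : FT, ∫⁻ x in (q.1).set ω, ENNReal.ofReal (w x) ≤
      (9:ℝ≥0∞)⁻¹ * (16 * ENNReal.ofReal A * ∫⁻ x in R.set ω, ENNReal.ofReal (w x)) := by
    have : ∑' q : FT, ∫⁻ x in (q.1).set ω, ENNReal.ofReal (w x) =
        (9:ℝ≥0∞)⁻¹ * ((9:ℝ≥0∞) * ∑' q : FT, ∫⁻ x in (q.1).set ω, ENNReal.ofReal (w x)) := by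
      rw [← mul_assoc, ENNReal.inv_mul_cancel (by norm_num) (by norm_num), one_mul]
    rw [this]
    exact mul_le_mul_right h9' _
  refine hfinal.trans ?_
  have hc : (9:ℝ≥0∞)⁻¹ * (16 * ENNReal.ofReal A) ≤ ENNReal.ofReal ((16/3) * A) := by
    have h1 : (9:ℝ≥0∞)⁻¹ * 16 = ENNReal.ofReal (16/9) := by
      rw [ENNReal.ofReal_div_of_pos (by norm_num), ENNReal.div_eq_inv_mul]
      norm_num
    rw [← mul_assoc, h1, ← ENNReal.ofReal_mul (by norm_num)]
    exact ENNReal.ofReal_le_ofReal (by nlinarith)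
  calc (9:ℝ≥0∞)⁻¹ * (16 * ENNReal.ofReal A * ∫⁻ x in R.set ω, ENNReal.ofReal (w x))
      = ((9:ℝ≥0∞)⁻¹ * (16 * ENNReal.ofReal A)) * ∫⁻ x in R.set ω, ENNReal.ofReal (w x) := by
        ring
    _ ≤ ENNReal.ofReal ((16/3) * A) * ∫⁻ x in R.set ω, ENNReal.ofReal (w x) :=
        mul_le_mul_left hc _

end
end

section
/- Let φ_Q, Q ∈ 𝒟_r, be a collection of functions such that: (1) φ_Q is supported on Q and is constant on each 𝒟_r-child of Q; (2) ‖φ_Q‖_∞ ≤ 1; (3) there exists δ ∈ (0,1) such that for every R ∈ 𝒟_r, |{x ∈ R : φ*_R(x) > 1}| ≤ δ|R|. Then for every R ∈ 𝒟_r and every t ≥ 0: |{x ∈ R : φ*_R(x) > t}| ≤ δ^{(t−1)/2}·|R|. -/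
open MeasureTheory Set
open scoped ENNReal NNReal Classical

noncomputable section

namespace JN18
open DyadicCube

variable {d : ℕ}

instance : Countable (DyadicCube d) := by
  have : Function.Injective (fun Q : DyadicCube d => (Q.k, Q.m)) := by
    intro ⟨a,b⟩ ⟨c,e⟩ h; simpa using h
  exact this.countable

def eIio (k : ℤ) : ℕ ≃ {j : ℤ // j < k} where
  toFun := fun n => ⟨k - 1 - n, by omega⟩
  invFun := fun j => (k - 1 - j.1).toNat
  left_inv := fun n => by simp
  right_inv := fun j => by
    have := j.2; apply Subtype.ext; simp; omega

lemma summable_shift (ω : TransParam d) (k : ℤ) (i : Fin d) :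
    Summable (fun j : {j : ℤ // j < k} => if ω j.1 i then (2:ℝ) ^ (j.1 : ℤ) else 0) := by
  rw [← (eIio k).summable_iff]
  have hg : Summable (fun n : ℕ => (2:ℝ) ^ (k - 1) * (2⁻¹ : ℝ) ^ n) :=
    (summable_geometric_of_lt_one (by norm_num) (by norm_num)).mul_left _
  apply hg.of_nonneg_of_le
  · intro n; simp only [eIio, Equiv.coe_fn_mk, Function.comp]; split_ifs <;> positivity
  · intro n
    have h2 : (2:ℝ) ^ (k - 1 - (n:ℤ)) = (2:ℝ) ^ (k-1) * (2⁻¹)^n := by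
      rw [zpow_sub₀ (by norm_num : (2:ℝ) ≠ 0), zpow_natCast, inv_pow]
      ring
    simp only [eIio, Equiv.coe_fn_mk, Function.comp]
    show (if ω (k - 1 - (n:ℤ)) i = true then (2:ℝ) ^ (k - 1 - (n:ℤ)) else 0) ≤ _
    by_cases hb : ω (k - 1 - (n:ℤ)) i = true
    · rw [if_pos hb]; exact le_of_eq h2
    · rw [if_neg hb]; positivity

lemma shiftVec_sub (ω : TransParam d) {k' k : ℤ} (h : k' ≤ k) (i : Fin d) :
    shiftVec ω k i = shiftVec ω k' i +
      ∑ j ∈ Finset.Ico k' k, (if ω j i then (2:ℝ) ^ j else 0) := by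
  classical
  set f : ℤ → ℝ := fun j => if ω j i then (2:ℝ) ^ j else 0 with hf
  have hA : Summable (f ∘ (Subtype.val : {j : ℤ | j < k'} → ℤ)) := summable_shift ω k' i
  have hB : Summable (f ∘ (Subtype.val : (↑(Finset.Ico k' k) : Set ℤ) → ℤ)) :=
    (Finset.Ico k' k).finite_toSet.summable f
  have hdisj : Disjoint {j : ℤ | j < k'} (↑(Finset.Ico k' k) : Set ℤ) := by
    rw [Set.disjoint_left]; intro a ha hb
    simp at ha hb; omega
  have hun : {j : ℤ | j < k'} ∪ (↑(Finset.Ico k' k) : Set ℤ) = {j : ℤ | j < k} := by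
    ext a; simp; omega
  have := Summable.tsum_union_disjoint (f := f) hdisj hA hB
  rw [hun] at this
  have h1 : shiftVec ω k i = ∑' (x : {j : ℤ | j < k}), f x := rfl
  have h2 : shiftVec ω k' i = ∑' (x : {j : ℤ | j < k'}), f x := rfl
  rw [h1, h2, this]
  congr 1
  exact Finset.tsum_subtype (Finset.Ico k' k) f

/-- corner point coordinate -/
def cc (ω : TransParam d) (Q : DyadicCube d) (i : Fin d) : ℝ :=
  (Q.m i : ℝ) * 2 ^ Q.k + shiftVec ω Q.k i

lemma mem_set_iff (ω : TransParam d) (Q : DyadicCube d) (x : Fin d → ℝ) :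
    x ∈ Q.set ω ↔ ∀ i, cc ω Q i ≤ x i ∧ x i < cc ω Q i + 2 ^ Q.k := by
  unfold DyadicCube.set cc
  constructor <;> intro h i <;> have h1 := (h i).1 <;> have h2 := (h i).2 <;>
    exact ⟨by linarith, by linarith⟩

lemma set_eq_pi (ω : TransParam d) (Q : DyadicCube d) :
    Q.set ω = Set.pi Set.univ (fun i => Set.Ico (cc ω Q i) (cc ω Q i + 2 ^ Q.k)) := by
  ext x; rw [mem_set_iff]; simp [Set.mem_pi, Set.mem_Ico]

lemma measurableSet_set (ω : TransParam d) (Q : DyadicCube d) :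
    MeasurableSet (Q.set ω) := by
  rw [set_eq_pi]
  exact MeasurableSet.univ_pi (fun i => measurableSet_Ico)

lemma volume_set (ω : TransParam d) (Q : DyadicCube d) :
    volume (Q.set ω) = (ENNReal.ofReal ((2:ℝ) ^ Q.k)) ^ d := by
  rw [set_eq_pi, volume_pi_pi]
  simp [Real.volume_Ico]

lemma corner_mem (ω : TransParam d) (Q : DyadicCube d) : (cc ω Q) ∈ Q.set ω := by
  rw [mem_set_iff]; intro i
  have : (0:ℝ) < 2 ^ Q.k := by positivity
  exact ⟨le_rfl, by linarith⟩

lemma set_nonempty (ω : TransParam d) (Q : DyadicCube d) : (Q.set ω).Nonempty :=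
  ⟨cc ω Q, corner_mem ω Q⟩


lemma shift_sub_int (ω : TransParam d) {k k' : ℤ} (h : k ≤ k') (i : Fin d) :
    ∃ n : ℤ, shiftVec ω k' i = shiftVec ω k i + (n : ℝ) * 2 ^ k := by
  refine ⟨∑ j ∈ Finset.Ico k k', (if ω j i then 2 ^ (j - k).toNat else 0), ?_⟩
  rw [shiftVec_sub ω h i]
  congr 1
  push_cast
  rw [Finset.sum_mul]
  apply Finset.sum_congr rfl
  intro j hj
  simp only [Finset.mem_Ico] at hj
  split
  · rw [← zpow_natCast (2:ℝ) (j - k).toNat, Int.toNat_of_nonneg (by omega),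
      ← zpow_add₀ (by norm_num : (2:ℝ) ≠ 0)]
    congr 1; omega
  · simp

lemma cc_sub_int (ω : TransParam d) {Q Q' : DyadicCube d} (h : Q.k ≤ Q'.k) (i : Fin d) :
    ∃ p : ℤ, cc ω Q i - cc ω Q' i = (p : ℝ) * 2 ^ Q.k := by
  obtain ⟨n, hn⟩ := shift_sub_int ω h i
  refine ⟨Q.m i - Q'.m i * 2 ^ (Q'.k - Q.k).toNat - n, ?_⟩
  have h2 : ((2:ℝ) ^ (Q'.k - Q.k).toNat : ℝ) * 2 ^ Q.k = 2 ^ Q'.k := by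
    rw [← zpow_natCast (2:ℝ), Int.toNat_of_nonneg (by omega),
      ← zpow_add₀ (by norm_num : (2:ℝ) ≠ 0)]
    congr 1; omega
  unfold cc
  rw [hn]
  push_cast
  linear_combination (Q'.m i : ℝ) * h2

lemma two_zpow_pos (k : ℤ) : (0:ℝ) < 2 ^ k := by positivity

/-- cubes are nested: smaller scale cube meeting a bigger one is inside it -/
lemma nested (ω : TransParam d) {Q Q' : DyadicCube d} (h : Q.k ≤ Q'.k)
    {x : Fin d → ℝ} (hx : x ∈ Q.set ω) (hx' : x ∈ Q'.set ω) :
    Q.set ω ⊆ Q'.set ω := by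
  intro y hy
  rw [mem_set_iff] at hx hx' hy ⊢
  intro i
  obtain ⟨p, hp⟩ := cc_sub_int ω h i
  have h2 : ((2:ℝ) ^ (Q'.k - Q.k).toNat : ℝ) * 2 ^ Q.k = 2 ^ Q'.k := by
    rw [← zpow_natCast (2:ℝ), Int.toNat_of_nonneg (by omega),
      ← zpow_add₀ (by norm_num : (2:ℝ) ≠ 0)]
    congr 1; omega
  set q : ℤ := 2 ^ (Q'.k - Q.k).toNat with hq
  have hqc : ((q:ℝ)) * 2 ^ Q.k = 2 ^ Q'.k := by rw [hq]; push_cast; exact h2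
  have hk := two_zpow_pos Q.k
  have hx1 := (hx i).1; have hx2 := (hx i).2
  have hx'1 := (hx' i).1; have hx'2 := (hx' i).2
  have hy1 := (hy i).1; have hy2 := (hy i).2
  have hr1 : (-1:ℝ) < (p:ℝ) := by
    have h1 : (-1:ℝ) * 2 ^ Q.k < (p:ℝ) * 2 ^ Q.k := by rw [← hp]; linarith
    exact (mul_lt_mul_iff_of_pos_right hk).mp h1
  have hr2 : (p:ℝ) < (q:ℝ) := by
    have h1 : (p:ℝ) * 2 ^ Q.k < (q:ℝ) * 2 ^ Q.k := by rw [← hp, hqc]; linarith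
    exact (mul_lt_mul_iff_of_pos_right hk).mp h1
  have hi1 : (-1:ℤ) < p := by exact_mod_cast hr1
  have hi2 : p < q := by exact_mod_cast hr2
  have hp0' : (0:ℝ) ≤ (p:ℝ) := by exact_mod_cast (by omega : (0:ℤ) ≤ p)
  have hpq' : (p:ℝ) + 1 ≤ (q:ℝ) := by exact_mod_cast (by omega : p + 1 ≤ q)
  constructor
  · nlinarith [mul_nonneg hp0' hk.le]
  · nlinarith [mul_le_mul_of_nonneg_right hpq' hk.le]

lemma cubeAt_k (ω : TransParam d) (k : ℤ) (x : Fin d → ℝ) : (cubeAt ω k x).k = k := rfl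

lemma cubeAt_mem (ω : TransParam d) (k : ℤ) (x : Fin d → ℝ) :
    x ∈ (cubeAt ω k x).set ω := by
  rw [mem_set_iff]
  intro i
  have hk := two_zpow_pos k
  unfold cc cubeAt
  simp only
  set u : ℝ := (x i - shiftVec ω k i) / 2 ^ k with hu
  have hcancel : u * 2 ^ k = x i - shiftVec ω k i := div_mul_cancel₀ _ (ne_of_gt hk)
  constructor
  · have h1 : (⌊u⌋ : ℝ) ≤ u := Int.floor_le _
    have := mul_le_mul_of_nonneg_right h1 hk.le
    rw [hcancel] at this
    linarith
  · have h1 : u < ⌊u⌋ + 1 := Int.lt_floor_add_one _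
    have := mul_lt_mul_of_pos_right h1 hk
    rw [hcancel] at this
    nlinarith

lemma cubeAt_eq (ω : TransParam d) {Q : DyadicCube d} {x : Fin d → ℝ} (hx : x ∈ Q.set ω) :
    cubeAt ω Q.k x = Q := by
  rw [mem_set_iff] at hx
  obtain ⟨k, m⟩ := Q
  simp only [cubeAt, DyadicCube.mk.injEq, heq_eq_eq, true_and]
  funext i
  have hk := two_zpow_pos k
  have h1 := (hx i).1; have h2 := (hx i).2
  unfold cc at h1 h2
  simp only at h1 h2
  rw [Int.floor_eq_iff]
  constructor
  · rw [le_div_iff₀ hk]; linarith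
  · rw [div_lt_iff₀ hk]; push_cast; linarith

lemma set_ne_of_k_lt (hd : 0 < d) (ω : TransParam d) {Q Q' : DyadicCube d}
    (h : Q.k < Q'.k) : Q.set ω ≠ Q'.set ω := by
  intro he
  have hv : volume (Q.set ω) = volume (Q'.set ω) := by rw [he]
  rw [volume_set, volume_set] at hv
  have hlt : (ENNReal.ofReal ((2:ℝ) ^ Q.k)) ^ d < (ENNReal.ofReal ((2:ℝ) ^ Q'.k)) ^ d := by
    apply ENNReal.pow_lt_pow_left hd.ne'
    exact (ENNReal.ofReal_lt_ofReal_iff (two_zpow_pos Q'.k)).mpr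
      (zpow_lt_zpow_right₀ (by norm_num) h)
  exact absurd hv (ne_of_lt hlt)

lemma k_lt_of_ssubset (ω : TransParam d) {Q Q' : DyadicCube d}
    (h : Q.set ω ⊂ Q'.set ω) : Q.k < Q'.k := by
  obtain ⟨x, hx⟩ := set_nonempty ω Q
  have hx' : x ∈ Q'.set ω := h.1 hx
  by_contra hc
  push_neg at hc
  have := nested ω hc hx' hx
  exact h.2 this

lemma ssubset_of_subset_of_k_lt (hd : 0 < d) (ω : TransParam d) {Q Q' : DyadicCube d}
    (hsub : Q.set ω ⊆ Q'.set ω) (hk : Q.k < Q'.k) : Q.set ω ⊂ Q'.set ω :=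
  ⟨hsub, fun h => set_ne_of_k_lt hd ω hk (le_antisymm hsub h)⟩


/-- the partial sum Σ_{Q ⊊ Rc ⊆ R} φ_Rc (x) -/
def SS (ω : TransParam d) (Dr : Set (DyadicCube d)) (φ : DyadicCube d → (Fin d → ℝ) → ℝ)
    (R Q : DyadicCube d) (x : Fin d → ℝ) : ℝ :=
  ∑' Rc : DyadicCube d,
    if Rc ∈ Dr ∧ Q.set ω ⊂ Rc.set ω ∧ Rc.set ω ⊆ R.set ω then φ Rc x else 0

/-- ancestor of `Q`, `n` generations up in the `2^r`-adic lattice -/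
def anc (ω : TransParam d) (r : ℕ) (Q : DyadicCube d) (n : ℕ) : DyadicCube d :=
  cubeAt ω (Q.k + r * n) (cc ω Q)

section Lattice

variable {ω : TransParam d} {r : ℕ} {j : ℤ} {Dr : Set (DyadicCube d)}

lemma anc_k (Q : DyadicCube d) (n : ℕ) : (anc ω r Q n).k = Q.k + r * n := rfl

lemma anc_zero (Q : DyadicCube d) : anc ω r Q 0 = Q := by
  have : Q.k + (r:ℤ) * (0:ℕ) = Q.k := by simp
  unfold anc
  rw [this]
  exact cubeAt_eq ω (corner_mem ω Q)

lemma corner_mem_anc (Q : DyadicCube d) (n : ℕ) : cc ω Q ∈ (anc ω r Q n).set ω :=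
  cubeAt_mem ω _ _

lemma subset_anc (Q : DyadicCube d) (n : ℕ) : Q.set ω ⊆ (anc ω r Q n).set ω :=
  nested ω (by rw [anc_k]; exact le_add_of_nonneg_right (by positivity))
    (corner_mem ω Q) (corner_mem_anc Q n)

lemma anc_unique {Q C : DyadicCube d} {n : ℕ} (hk : C.k = Q.k + r * n)
    (hsub : Q.set ω ⊆ C.set ω) : C = anc ω r Q n := by
  have h1 : cc ω Q ∈ C.set ω := hsub (corner_mem ω Q)
  have := cubeAt_eq ω h1
  rw [hk] at this
  exact this.symm

lemma anc_trans {Q C : DyadicCube d} {N1 : ℕ} (hsub : Q.set ω ⊆ C.set ω)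
    (hk : C.k = Q.k + r * N1) (m : ℕ) : anc ω r Q (N1 + m) = anc ω r C m := by
  have h1 : cc ω Q ∈ (anc ω r C m).set ω := subset_anc C m (hsub (corner_mem ω Q))
  have h2 := cubeAt_eq ω h1
  rw [anc_k, hk] at h2
  have h3 : Q.k + (r:ℤ) * (N1 + m : ℕ) = Q.k + r * N1 + r * m := by push_cast; ring
  unfold anc
  rw [h3]
  exact h2

lemma dr_k (hDr : Dr = {Q : DyadicCube d | ∃ τ : ℤ, Q.k = j + r * τ})
    {Q : DyadicCube d} (hQ : Q ∈ Dr) : ∃ τ : ℤ, Q.k = j + r * τ := by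
  rw [hDr] at hQ; exact hQ

lemma anc_mem_dr (hDr : Dr = {Q : DyadicCube d | ∃ τ : ℤ, Q.k = j + r * τ})
    {Q : DyadicCube d} (hQ : Q ∈ Dr) (n : ℕ) : anc ω r Q n ∈ Dr := by
  obtain ⟨τ, hτ⟩ := dr_k hDr hQ
  rw [hDr]
  exact ⟨τ + n, by rw [anc_k, hτ]; push_cast; ring⟩

lemma dr_le (hd : 0 < d) {Q R : DyadicCube d}
    (hsub : Q.set ω ⊆ R.set ω) : Q.k ≤ R.k := by
  by_contra hc
  push_neg at hc
  have h1 : R.set ω ⊆ Q.set ω :=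
    nested ω hc.le (hsub (corner_mem ω Q)) (corner_mem ω Q)
  exact set_ne_of_k_lt hd ω hc (le_antisymm h1 hsub)

lemma dr_N (hd : 0 < d) (hr : 1 ≤ r)
    (hDr : Dr = {Q : DyadicCube d | ∃ τ : ℤ, Q.k = j + r * τ})
    {Q R : DyadicCube d} (hQ : Q ∈ Dr) (hR : R ∈ Dr)
    (hsub : Q.set ω ⊆ R.set ω) : ∃ N : ℕ, R.k = Q.k + r * N := by
  obtain ⟨τ, hτ⟩ := dr_k hDr hQ
  obtain ⟨τ', hτ'⟩ := dr_k hDr hR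
  have hle : Q.k ≤ R.k := dr_le hd hsub
  have heq : R.k = Q.k + (r:ℤ) * (τ' - τ) := by rw [hτ, hτ']; ring
  have hττ : 0 ≤ τ' - τ := by nlinarith [heq, hle, (by exact_mod_cast hr : (1:ℤ) ≤ r)]
  refine ⟨(τ' - τ).toNat, ?_⟩
  rw [heq]
  congr 1
  congr 1
  exact (Int.toNat_of_nonneg hττ).symm

lemma dr_gap (hd : 0 < d) (hr : 1 ≤ r)
    (hDr : Dr = {Q : DyadicCube d | ∃ τ : ℤ, Q.k = j + r * τ})
    {Q R' : DyadicCube d} (hQ : Q ∈ Dr) (hR' : R' ∈ Dr)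
    (hss : Q.set ω ⊂ R'.set ω) : Q.k + r ≤ R'.k := by
  obtain ⟨N, hN⟩ := dr_N hd hr hDr hQ hR' hss.1
  have hk := k_lt_of_ssubset ω hss
  have hN1 : 1 ≤ N := by
    by_contra hc
    push_neg at hc
    interval_cases N
    · simp at hN; omega
  have h6 : (r:ℤ) * 1 ≤ (r:ℤ) * (N:ℤ) := by
    apply mul_le_mul_of_nonneg_left (by exact_mod_cast hN1) (by positivity)
  have h7 : (r:ℤ) ≤ (r:ℤ) * (N:ℤ) := by linarith
  linarith

/-- The key representation: `SS` is the finite sum of `φ` over the ancestors of `Q`. -/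
lemma SS_rep (hd : 0 < d) (hr : 1 ≤ r)
    (hDr : Dr = {Q : DyadicCube d | ∃ τ : ℤ, Q.k = j + r * τ})
    (φ : DyadicCube d → (Fin d → ℝ) → ℝ)
    {Q R : DyadicCube d} (hQ : Q ∈ Dr) (hR : R ∈ Dr)
    (hsub : Q.set ω ⊆ R.set ω) {N : ℕ} (hN : R.k = Q.k + r * N) (x : Fin d → ℝ) :
    SS ω Dr φ R Q x = ∑ n ∈ Finset.range N, φ (anc ω r Q (n + 1)) x := by
  have hrz : (0:ℤ) < (r:ℤ) := by exact_mod_cast hr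
  have hinj : ∀ n1 ∈ Finset.range N, ∀ n2 ∈ Finset.range N,
      anc ω r Q (n1 + 1) = anc ω r Q (n2 + 1) → n1 = n2 := by
    intro n1 _ n2 _ h
    have := congrArg DyadicCube.k h
    rw [anc_k, anc_k] at this
    have h2 : (r:ℤ) * ((n1+1 : ℕ) : ℤ) = (r:ℤ) * ((n2+1 : ℕ) : ℤ) := by linarith
    have h3 := mul_left_cancel₀ (ne_of_gt hrz) h2
    have h4 : n1 + 1 = n2 + 1 := by exact_mod_cast h3
    omega
  rw [SS, tsum_eq_sum (s := (Finset.range N).image (fun n => anc ω r Q (n + 1)))]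
  · rw [Finset.sum_image hinj]
    apply Finset.sum_congr rfl
    intro n hn
    rw [Finset.mem_range] at hn
    rw [if_pos]
    refine ⟨anc_mem_dr hDr hQ (n+1), ?_, ?_⟩
    · apply ssubset_of_subset_of_k_lt hd ω (subset_anc Q (n+1))
      rw [anc_k]
      have : (0:ℤ) < r * (n+1 : ℕ) := by positivity
      linarith
    · have hsc : (anc ω r Q (n+1)).k ≤ R.k := by
        rw [anc_k, hN]
        have : (r:ℤ) * (n+1 : ℕ) ≤ r * N := by
          apply mul_le_mul_of_nonneg_left (by exact_mod_cast hn : ((n+1:ℕ):ℤ) ≤ N) hrz.le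
        linarith
      exact nested ω hsc (corner_mem_anc Q (n+1)) (hsub (corner_mem ω Q))
  · intro Rc hRc
    rw [if_neg]
    intro ⟨hRcDr, hss, hsub'⟩
    apply hRc
    -- Rc is an ancestor of Q
    obtain ⟨M, hM⟩ := dr_N hd hr hDr hQ hRcDr hss.1
    have hM1 : 1 ≤ M := by
      have := dr_gap hd hr hDr hQ hRcDr hss
      by_contra hc
      push_neg at hc
      interval_cases M
      · simp at hM; omega
    -- Rc.k ≤ R.k
    have hRck : Rc.k ≤ R.k := dr_le hd hsub'
    have hMN : M ≤ N := by
      have h5 : (r:ℤ) * (M:ℤ) ≤ (r:ℤ) * (N:ℤ) := by linarith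
      exact_mod_cast le_of_mul_le_mul_left h5 hrz
    rw [Finset.mem_image]
    refine ⟨M - 1, Finset.mem_range.mpr (by omega), ?_⟩
    have : M - 1 + 1 = M := by omega
    rw [this]
    exact (anc_unique hM hss.1).symm

lemma SS_self (hd : 0 < d) (hr : 1 ≤ r)
    (hDr : Dr = {Q : DyadicCube d | ∃ τ : ℤ, Q.k = j + r * τ})
    (φ : DyadicCube d → (Fin d → ℝ) → ℝ) {R : DyadicCube d} (hR : R ∈ Dr) (x : Fin d → ℝ) :
    SS ω Dr φ R R x = 0 := by
  rw [SS_rep hd hr hDr φ hR hR subset_rfl (N := 0) (by simp) x]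
  simp

lemma SS_split (hd : 0 < d) (hr : 1 ≤ r)
    (hDr : Dr = {Q : DyadicCube d | ∃ τ : ℤ, Q.k = j + r * τ})
    (φ : DyadicCube d → (Fin d → ℝ) → ℝ)
    {Q C R : DyadicCube d} (hQ : Q ∈ Dr) (hC : C ∈ Dr) (hR : R ∈ Dr)
    (hsub1 : Q.set ω ⊆ C.set ω) (hsub2 : C.set ω ⊆ R.set ω) (x : Fin d → ℝ) :
    SS ω Dr φ R Q x = SS ω Dr φ C Q x + SS ω Dr φ R C x := by
  obtain ⟨N1, hN1⟩ := dr_N hd hr hDr hQ hC hsub1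
  obtain ⟨N2, hN2⟩ := dr_N hd hr hDr hC hR hsub2
  have hN : R.k = Q.k + r * (N1 + N2 : ℕ) := by rw [hN2, hN1]; push_cast; ring
  rw [SS_rep hd hr hDr φ hQ hR (hsub1.trans hsub2) hN x,
    SS_rep hd hr hDr φ hQ hC hsub1 hN1 x,
    SS_rep hd hr hDr φ hC hR hsub2 hN2 x,
    Finset.sum_range_add]
  congr 1
  apply Finset.sum_congr rfl
  intro n _
  congr 1
  have : N1 + n + 1 = N1 + (n + 1) := by omega
  rw [this]
  exact anc_trans hsub1 hN1 (n+1)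

/-- constancy of each `φ_Rc`, `Rc ⊋ Q`, on `Q` -/
lemma SS_const (hd : 0 < d) (hr : 1 ≤ r)
    (hDr : Dr = {Q : DyadicCube d | ∃ τ : ℤ, Q.k = j + r * τ})
    (φ : DyadicCube d → (Fin d → ℝ) → ℝ)
    (hconst : ∀ Q ∈ Dr, ∀ x y : Fin d → ℝ,
      cubeAt ω (Q.k - r) x = cubeAt ω (Q.k - r) y → φ Q x = φ Q y)
    {Q R : DyadicCube d} (hQ : Q ∈ Dr) (hR : R ∈ Dr)
    (hsub : Q.set ω ⊆ R.set ω) {x y : Fin d → ℝ}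
    (hx : x ∈ Q.set ω) (hy : y ∈ Q.set ω) :
    SS ω Dr φ R Q x = SS ω Dr φ R Q y := by
  obtain ⟨N, hN⟩ := dr_N hd hr hDr hQ hR hsub
  rw [SS_rep hd hr hDr φ hQ hR hsub hN x, SS_rep hd hr hDr φ hQ hR hsub hN y]
  apply Finset.sum_congr rfl
  intro n _
  apply hconst _ (anc_mem_dr hDr hQ (n+1))
  -- cubes at scale (anc).k - r containing x resp. y coincide
  have hscale : (anc ω r Q (n+1)).k - r = Q.k + r * n := by
    rw [anc_k]; push_cast; ring
  set D := cubeAt ω ((anc ω r Q (n+1)).k - r) x with hD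
  have hDk : D.k = (anc ω r Q (n+1)).k - r := rfl
  have hQD : Q.set ω ⊆ D.set ω := by
    apply nested ω _ hx (cubeAt_mem ω _ x)
    rw [hDk, hscale]
    exact le_add_of_nonneg_right (by positivity)
  have hyD : y ∈ D.set ω := hQD hy
  have := cubeAt_eq ω hyD
  rw [hDk] at this
  exact this.symm

end Lattice


section Main
variable {ω : TransParam d} {r : ℕ} {j : ℤ} {Dr : Set (DyadicCube d)}
  {φ : DyadicCube d → (Fin d → ℝ) → ℝ}

/-- the superlevel set of the maximal function -/
def Eset (ω : TransParam d) (Dr : Set (DyadicCube d)) (φ : DyadicCube d → (Fin d → ℝ) → ℝ)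
    (R : DyadicCube d) (t : ℝ) : Set (Fin d → ℝ) :=
  {x | x ∈ R.set ω ∧ ∃ Q ∈ Dr, x ∈ Q.set ω ∧ t < |SS ω Dr φ R Q x|}

lemma Eset_anti {R : DyadicCube d} {s t : ℝ} (h : s ≤ t) :
    Eset ω Dr φ R t ⊆ Eset ω Dr φ R s := by
  rintro x ⟨hxR, Q, hQ, hxQ, hgt⟩
  exact ⟨hxR, Q, hQ, hxQ, lt_of_le_of_lt h hgt⟩

lemma SS_eq_zero {R Q : DyadicCube d} (h : ¬ Q.set ω ⊂ R.set ω) (x : Fin d → ℝ) :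
    SS ω Dr φ R Q x = 0 := by
  rw [SS]
  have hz : ∀ Rc : DyadicCube d,
      (if Rc ∈ Dr ∧ Q.set ω ⊂ Rc.set ω ∧ Rc.set ω ⊆ R.set ω then φ Rc x else 0) = 0 := by
    intro Rc
    rw [if_neg]
    rintro ⟨_, h2, h3⟩
    exact h (ssubset_of_ssubset_of_subset h2 h3)
  simp only [hz]
  exact tsum_zero

lemma witness_ss {R Q : DyadicCube d} {x : Fin d → ℝ} {t : ℝ} (ht : 0 ≤ t)
    (hgt : t < |SS ω Dr φ R Q x|) : Q.set ω ⊂ R.set ω := by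
  by_contra h
  rw [SS_eq_zero h x] at hgt
  simp at hgt
  linarith

/-- stopping cube at `x` -/
def IsStop (ω : TransParam d) (r : ℕ) (Dr : Set (DyadicCube d))
    (φ : DyadicCube d → (Fin d → ℝ) → ℝ) (R : DyadicCube d) (t : ℝ)
    (x : Fin d → ℝ) (C : DyadicCube d) : Prop :=
  x ∈ C.set ω ∧ C ∈ Dr ∧ C.k + r ≤ R.k ∧ C.set ω ⊆ R.set ω ∧
  (∀ y ∈ C.set ω, t < |SS ω Dr φ R C y| ∧ |SS ω Dr φ R C y| ≤ t + 1) ∧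
  (∀ Q' ∈ Dr, x ∈ Q'.set ω → Q'.k + r ≤ R.k → t < |SS ω Dr φ R Q' x| → Q'.k ≤ C.k)

lemma exists_stop (hd : 0 < d) (hr : 1 ≤ r)
    (hDr : Dr = {Q : DyadicCube d | ∃ τ : ℤ, Q.k = j + r * τ})
    (hconst : ∀ Q ∈ Dr, ConstOnScale ω (Q.k - r) (φ Q))
    (hbd : ∀ Q x, |φ Q x| ≤ 1)
    {R : DyadicCube d} (hR : R ∈ Dr) {t : ℝ} (ht : 0 ≤ t)
    {x : Fin d → ℝ} (hx : x ∈ Eset ω Dr φ R t) :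
    ∃ C, IsStop ω r Dr φ R t x C := by
  obtain ⟨hxR, Q, hQ, hxQ, hgt⟩ := hx
  have hrz : (0:ℤ) < (r:ℤ) := by exact_mod_cast hr
  obtain ⟨τR, hτR⟩ := dr_k hDr hR
  set pred : ℤ → Prop := fun τ =>
    j + r * τ + r ≤ R.k ∧ t < |SS ω Dr φ R (cubeAt ω (j + r * τ) x) x| with hpred
  -- pred has a witness
  have hQss : Q.set ω ⊂ R.set ω := witness_ss ht hgt
  obtain ⟨τQ, hτQ⟩ := dr_k hDr hQ
  have hQgap : Q.k + r ≤ R.k := dr_gap hd hr hDr hQ hR hQss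
  have hQcA : cubeAt ω (j + r * τQ) x = Q := by
    rw [← hτQ]; exact cubeAt_eq ω hxQ
  have hw : pred τQ := by
    constructor
    · omega
    · rw [hQcA]; exact hgt
  -- pred is bounded above
  have hbdd : ∀ z : ℤ, pred z → z ≤ τR := by
    intro z hz
    have h1 : j + r * z + r ≤ R.k := hz.1
    rw [hτR] at h1
    have h2 : (r:ℤ) * (z + 1) ≤ r * τR := by linarith
    have := le_of_mul_le_mul_left h2 hrz
    omega
  obtain ⟨τs, hps, hmax⟩ := Int.exists_greatest_of_bdd ⟨τR, hbdd⟩ ⟨τQ, hw⟩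
  set C : DyadicCube d := cubeAt ω (j + r * τs) x with hC
  have hCk : C.k = j + r * τs := rfl
  have hCDr : C ∈ Dr := by rw [hDr]; exact ⟨τs, hCk⟩
  have hxC : x ∈ C.set ω := cubeAt_mem ω _ x
  have hCgap : C.k + r ≤ R.k := by rw [hCk]; exact hps.1
  have hCsub : C.set ω ⊆ R.set ω := nested ω (by omega) hxC hxR
  have hCgt : t < |SS ω Dr φ R C x| := hps.2
  -- upper bound t+1 at x
  set Cp : DyadicCube d := anc ω r C 1 with hCp
  have hCpk : Cp.k = C.k + r := by rw [hCp, anc_k]; push_cast; ring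
  have hCpDr : Cp ∈ Dr := anc_mem_dr hDr hCDr 1
  have hCCp : C.set ω ⊆ Cp.set ω := subset_anc C 1
  have hxCp : x ∈ Cp.set ω := hCCp hxC
  have hCpsub : Cp.set ω ⊆ R.set ω := nested ω (by omega) hxCp hxR
  have hsplit := SS_split hd hr hDr φ hCDr hCpDr hR hCCp hCpsub x
  have hsingle : SS ω Dr φ Cp C x = φ Cp x := by
    rw [SS_rep hd hr hDr φ hCDr hCpDr hCCp (N := 1)
      (by rw [hCpk]; push_cast; ring) x]
    simp [hCp]
  have hCpbd : |SS ω Dr φ R Cp x| ≤ t := by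
    by_cases hcase : Cp.k + r ≤ R.k
    · have hA : j + (r:ℤ) * (τs + 1) + r ≤ R.k := by
        have hx1 : (r:ℤ) * (τs + 1) = r * τs + r := by ring
        rw [hCpk, hCk] at hcase
        linarith
      have hCpeq : cubeAt ω (j + r * (τs + 1)) x = Cp := by
        have h1 : Cp.k = j + r * (τs + 1) := by rw [hCpk, hCk]; ring
        rw [← h1]
        exact cubeAt_eq ω hxCp
      have hB : ¬ t < |SS ω Dr φ R Cp x| := by
        intro hB'
        have hcon : pred (τs + 1) := ⟨hA, by rw [hCpeq]; exact hB'⟩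
        have := hmax _ hcon
        omega
      exact not_lt.mp hB
    · -- Cp.set = R.set
      obtain ⟨M, hM⟩ := dr_N hd hr hDr hCpDr hR hCpsub
      have hM0 : M = 0 := by
        by_contra hM1
        have h1 : 1 ≤ M := Nat.one_le_iff_ne_zero.mpr hM1
        have h2 : (r:ℤ) * 1 ≤ (r:ℤ) * (M:ℤ) :=
          mul_le_mul_of_nonneg_left (by exact_mod_cast h1) hrz.le
        apply hcase
        linarith [hM, h2]
      rw [hM0] at hM
      simp at hM
      have hRsub : R.set ω ⊆ Cp.set ω := nested ω (by omega) hxR hxCp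
      have heq : Cp.set ω = R.set ω := le_antisymm hCpsub hRsub
      have : SS ω Dr φ R Cp x = 0 := by
        apply SS_eq_zero
        rw [heq]
        exact fun h => h.2 subset_rfl
      rw [this]
      simpa using ht
  have hupper : |SS ω Dr φ R C x| ≤ t + 1 := by
    rw [hsplit, hsingle]
    calc |φ Cp x + SS ω Dr φ R Cp x| ≤ |φ Cp x| + |SS ω Dr φ R Cp x| := abs_add_le _ _
    _ ≤ 1 + t := add_le_add (hbd Cp x) hCpbd
    _ = t + 1 := by ring
  refine ⟨C, hxC, hCDr, hCgap, hCsub, ?_, ?_⟩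
  · intro y hy
    have hcst := SS_const hd hr hDr φ hconst hCDr hR hCsub hy hxC
    rw [hcst]
    exact ⟨hCgt, hupper⟩
  · intro Q' hQ' hxQ' hgap' hgt'
    obtain ⟨τ', hτ'⟩ := dr_k hDr hQ'
    have hQ'cA : cubeAt ω (j + r * τ') x = Q' := by
      rw [← hτ']; exact cubeAt_eq ω hxQ'
    have hp' : pred τ' := by
      constructor
      · omega
      · rw [hQ'cA]; exact hgt'
    have hle := hmax _ hp'
    rw [hτ', hCk]
    have : (r:ℤ) * τ' ≤ (r:ℤ) * τs := mul_le_mul_of_nonneg_left hle hrz.le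
    omega

/-- stopping cubes either coincide or are disjoint -/
lemma stop_disjoint (hd : 0 < d) {R : DyadicCube d} {t : ℝ}
    {x x' : Fin d → ℝ} {C C' : DyadicCube d}
    (h1 : IsStop ω r Dr φ R t x C) (h2 : IsStop ω r Dr φ R t x' C')
    (hne : ¬ Disjoint (C.set ω) (C'.set ω)) : C = C' := by
  rw [Set.not_disjoint_iff] at hne
  obtain ⟨z, hz, hz'⟩ := hne
  -- key sub-step: if C.k ≤ C'.k then C'.k ≤ C.k
  have key : ∀ (y y' : Fin d → ℝ) (D D' : DyadicCube d),
      IsStop ω r Dr φ R t y D → IsStop ω r Dr φ R t y' D' →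
      z ∈ D.set ω → z ∈ D'.set ω → D.k ≤ D'.k → D'.k ≤ D.k := by
    intro y y' D D' hD hD' hzD hzD' hkk
    obtain ⟨hyD, hDDr, hDgap, hDsub, hDbd, hDmax⟩ := hD
    obtain ⟨hy'D', hD'Dr, hD'gap, hD'sub, hD'bd, hD'max⟩ := hD'
    have hsub : D.set ω ⊆ D'.set ω := nested ω hkk hzD hzD'
    have hyD' : y ∈ D'.set ω := hsub hyD
    have hgt : t < |SS ω Dr φ R D' y| := (hD'bd y hyD').1
    exact hDmax D' hD'Dr hyD' hD'gap hgt
  rcases le_total C.k C'.k with hkk | hkk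
  · have hk2 := key x x' C C' h1 h2 hz hz' hkk
    have hke : C.k = C'.k := le_antisymm hkk hk2
    have e1 : cubeAt ω C.k z = C := cubeAt_eq ω hz
    have e2 : cubeAt ω C'.k z = C' := cubeAt_eq ω hz'
    rw [← e1, ← e2, hke]
  · have hk2 := key x' x C' C h2 h1 hz' hz hkk
    have hke : C.k = C'.k := le_antisymm hk2 hkk
    have e1 : cubeAt ω C.k z = C := cubeAt_eq ω hz
    have e2 : cubeAt ω C'.k z = C' := cubeAt_eq ω hz'
    rw [← e1, ← e2, hke]

/-- inside a stopping cube, points of `E(t+2)` lie in the level-1 set of the cube -/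
lemma mem_Eset_one (hd : 0 < d) (hr : 1 ≤ r)
    (hDr : Dr = {Q : DyadicCube d | ∃ τ : ℤ, Q.k = j + r * τ})
    {R : DyadicCube d} (hR : R ∈ Dr) {t : ℝ} (ht : 0 ≤ t)
    {x : Fin d → ℝ} {C : DyadicCube d} (hstop : IsStop ω r Dr φ R t x C)
    (hx2 : x ∈ Eset ω Dr φ R (t + 2)) : x ∈ Eset ω Dr φ C 1 := by
  obtain ⟨hxC, hCDr, hCgap, hCsub, hCbd, hCmax⟩ := hstop
  obtain ⟨hxR, Q', hQ', hxQ', hgt'⟩ := hx2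
  have hrz : (0:ℤ) < (r:ℤ) := by exact_mod_cast hr
  have hQ'ss : Q'.set ω ⊂ R.set ω := witness_ss (by linarith) hgt'
  have hQ'gap : Q'.k + r ≤ R.k := dr_gap hd hr hDr hQ' hR hQ'ss
  -- Q'.k < C.k
  have hklt : Q'.k < C.k := by
    by_contra hc
    push_neg at hc
    -- C.set ⊆ Q'.set, so by maximality Q'.k ≤ C.k, hence equality
    have hle : Q'.k ≤ C.k :=
      hCmax Q' hQ' hxQ' hQ'gap (by linarith [hgt'])
    have hke : Q'.k = C.k := le_antisymm hle hc
    have e1 : cubeAt ω Q'.k x = Q' := cubeAt_eq ω hxQ'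
    have e2 : cubeAt ω C.k x = C := cubeAt_eq ω hxC
    have : Q' = C := by rw [← e1, ← e2, hke]
    rw [this] at hgt'
    have := (hCbd x hxC).2
    linarith
  have hQ'C : Q'.set ω ⊆ C.set ω := nested ω hklt.le hxQ' hxC
  have hsplit := SS_split hd hr hDr φ hQ' hCDr hR hQ'C hCsub x
  have hub := (hCbd x hxC).2
  refine ⟨hxC, Q', hQ', hxQ', ?_⟩
  have : |SS ω Dr φ R Q' x| ≤ |SS ω Dr φ C Q' x| + |SS ω Dr φ R C x| := by
    rw [hsplit]; exact abs_add_le _ _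
  linarith


lemma step (hd : 0 < d) (hr : 1 ≤ r)
    (hDr : Dr = {Q : DyadicCube d | ∃ τ : ℤ, Q.k = j + r * τ})
    (hconst : ∀ Q ∈ Dr, ConstOnScale ω (Q.k - r) (φ Q))
    (hbd : ∀ Q x, |φ Q x| ≤ 1) {δ : ℝ}
    (h3 : ∀ R ∈ Dr, volume (Eset ω Dr φ R 1) ≤ ENNReal.ofReal δ * volume (R.set ω))
    {R : DyadicCube d} (hR : R ∈ Dr) {t : ℝ} (ht : 0 ≤ t) :
    volume (Eset ω Dr φ R (t + 2)) ≤ ENNReal.ofReal δ * volume (Eset ω Dr φ R t) := by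
  classical
  let stopF : (Fin d → ℝ) → DyadicCube d := fun x =>
    if hx : x ∈ Eset ω Dr φ R t then
      Classical.choose (exists_stop hd hr hDr hconst hbd hR ht hx)
    else ⟨0, fun _ => 0⟩
  have hstopF : ∀ x (hx : x ∈ Eset ω Dr φ R t), IsStop ω r Dr φ R t x (stopF x) := by
    intro x hx
    simp only [stopF, dif_pos hx]
    exact Classical.choose_spec (exists_stop hd hr hDr hconst hbd hR ht hx)
  set G : Set (DyadicCube d) := stopF '' (Eset ω Dr φ R t) with hG
  have hGstop : ∀ C ∈ G, ∃ x, x ∈ Eset ω Dr φ R t ∧ IsStop ω r Dr φ R t x C := by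
    rintro C ⟨x, hx, rfl⟩
    exact ⟨x, hx, hstopF x hx⟩
  have hcover : Eset ω Dr φ R (t + 2) ⊆ ⋃ C ∈ G, Eset ω Dr φ C 1 := by
    intro x hx2
    have hx : x ∈ Eset ω Dr φ R t := Eset_anti (by linarith) hx2
    exact Set.mem_biUnion ⟨x, hx, rfl⟩ (mem_Eset_one hd hr hDr hR ht (hstopF x hx) hx2)
  have hGDr : ∀ C ∈ G, C ∈ Dr := by
    intro C hC
    obtain ⟨x, _, hs⟩ := hGstop C hC
    exact hs.2.1
  have hdisj : G.PairwiseDisjoint (fun C : DyadicCube d => C.set ω) := by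
    intro C hC C' hC' hne
    obtain ⟨x, _, hs⟩ := hGstop C hC
    obtain ⟨x', _, hs'⟩ := hGstop C' hC'
    by_contra hcon
    exact hne (stop_disjoint hd hs hs' hcon)
  have hUsub : (⋃ C ∈ G, (C : DyadicCube d).set ω) ⊆ Eset ω Dr φ R t := by
    intro y hy
    rw [Set.mem_iUnion₂] at hy
    obtain ⟨C, hC, hyC⟩ := hy
    obtain ⟨x, _, hs⟩ := hGstop C hC
    exact ⟨hs.2.2.2.1 hyC, C, hs.2.1, hyC, (hs.2.2.2.2.1 y hyC).1⟩
  calc volume (Eset ω Dr φ R (t + 2)) ≤ volume (⋃ C ∈ G, Eset ω Dr φ C 1) :=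
        measure_mono hcover
  _ ≤ ∑' C : G, volume (Eset ω Dr φ (C : DyadicCube d) 1) :=
        measure_biUnion_le volume (G.to_countable) _
  _ ≤ ∑' C : G, ENNReal.ofReal δ * volume ((C : DyadicCube d).set ω) :=
        ENNReal.tsum_le_tsum (fun C => h3 C (hGDr C C.2))
  _ = ENNReal.ofReal δ * ∑' C : G, volume ((C : DyadicCube d).set ω) :=
        ENNReal.tsum_mul_left
  _ = ENNReal.ofReal δ * volume (⋃ C ∈ G, (C : DyadicCube d).set ω) := by
        rw [measure_biUnion (G.to_countable) hdisj (fun C _ => measurableSet_set ω C)]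
  _ ≤ ENNReal.ofReal δ * volume (Eset ω Dr φ R t) :=
        mul_le_mul_right (measure_mono hUsub) _

lemma main_bound (hd : 0 < d) (hr : 1 ≤ r)
    (hDr : Dr = {Q : DyadicCube d | ∃ τ : ℤ, Q.k = j + r * τ})
    (hconst : ∀ Q ∈ Dr, ConstOnScale ω (Q.k - r) (φ Q))
    (hbd : ∀ Q x, |φ Q x| ≤ 1) {δ : ℝ} (hδ0 : 0 < δ) (hδ1 : δ < 1)
    (h3 : ∀ R ∈ Dr, volume (Eset ω Dr φ R 1) ≤ ENNReal.ofReal δ * volume (R.set ω))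
    {R : DyadicCube d} (hR : R ∈ Dr) {t : ℝ} (ht : 0 ≤ t) :
    volume (Eset ω Dr φ R t) ≤ ENNReal.ofReal (δ ^ ((t - 1) / 2)) * volume (R.set ω) := by
  have claim : ∀ n : ℕ, volume (Eset ω Dr φ R (2 * n + 1)) ≤
      (ENNReal.ofReal δ) ^ (n + 1) * volume (R.set ω) := by
    intro n
    induction n with
    | zero => simpa using h3 R hR
    | succ n ih =>
      have h0 : (0:ℝ) ≤ 2 * n + 1 := by positivity
      have hstep := step hd hr hDr hconst hbd h3 hR h0
      have heq : (2 * ((n:ℝ) + 1) + 1) = (2 * n + 1) + 2 := by ring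
      have hcst : ((2:ℝ) * ((n + 1 : ℕ) : ℝ) + 1) = (2 * (n:ℝ) + 1) + 2 := by
        push_cast; ring
      rw [hcst]
      calc volume (Eset ω Dr φ R ((2 * (n:ℝ) + 1) + 2)) ≤
            ENNReal.ofReal δ * volume (Eset ω Dr φ R (2 * n + 1)) := hstep
      _ ≤ ENNReal.ofReal δ * ((ENNReal.ofReal δ) ^ (n + 1) * volume (R.set ω)) :=
            mul_le_mul_right ih _
      _ = (ENNReal.ofReal δ) ^ (n + 1 + 1) * volume (R.set ω) := by ring
  rcases le_or_gt t 1 with h1 | h1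
  · have hsub : Eset ω Dr φ R t ⊆ R.set ω := fun x hx => hx.1
    have hexp : 1 ≤ δ ^ ((t - 1) / 2) :=
      Real.one_le_rpow_of_pos_of_le_one_of_nonpos hδ0 hδ1.le (by linarith)
    calc volume (Eset ω Dr φ R t) ≤ volume (R.set ω) := measure_mono hsub
    _ ≤ ENNReal.ofReal (δ ^ ((t - 1) / 2)) * volume (R.set ω) :=
        le_mul_of_one_le_left zero_le (ENNReal.one_le_ofReal.mpr hexp)
  · set n := ⌊(t - 1) / 2⌋₊ with hn
    have hn1 : (n:ℝ) ≤ (t - 1) / 2 := Nat.floor_le (by linarith)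
    have hn2 : (t - 1) / 2 < n + 1 := Nat.lt_floor_add_one _
    have hsub : Eset ω Dr φ R t ⊆ Eset ω Dr φ R (2 * n + 1) := Eset_anti (by linarith)
    calc volume (Eset ω Dr φ R t) ≤ volume (Eset ω Dr φ R (2 * n + 1)) :=
          measure_mono hsub
    _ ≤ (ENNReal.ofReal δ) ^ (n + 1) * volume (R.set ω) := claim n
    _ ≤ ENNReal.ofReal (δ ^ ((t - 1) / 2)) * volume (R.set ω) := by
        apply mul_le_mul_left
        rw [← ENNReal.ofReal_pow hδ0.le]
        apply ENNReal.ofReal_le_ofReal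
        calc δ ^ (n + 1 : ℕ) = δ ^ (((n + 1 : ℕ) : ℝ)) := (Real.rpow_natCast δ (n + 1)).symm
        _ ≤ δ ^ ((t - 1) / 2) :=
            Real.rpow_le_rpow_of_exponent_ge hδ0 hδ1.le (by push_cast; linarith)

end Main
end JN18

/-- **John–Nirenberg type estimate, Lemma 5.4.** Let `𝒟_r` be the `2^r`-adic
sublattice of cubes of side `2^{j+rτ}`, and let `(φ_Q)_{Q∈𝒟_r}` satisfy: `φ_Q` supported on
`Q` and constant on the `𝒟_r`-children of `Q`; `‖φ_Q‖_∞ ≤ 1`; and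
`|{x ∈ R : φ*_R(x) > 1}| ≤ δ|R|` for all `R ∈ 𝒟_r`. Then
`|{x ∈ R : φ*_R(x) > t}| ≤ δ^{(t-1)/2}|R|` for all `R ∈ 𝒟_r` and `t ≥ 0`. -/
theorem statement18 (d : ℕ) (hd : 0 < d) (ω : TransParam d) (r : ℕ) (hr : 1 ≤ r) (j : ℤ)
    (Dr : Set (DyadicCube d)) (hDr : Dr = {Q : DyadicCube d | ∃ τ : ℤ, Q.k = j + r * τ})
    (φ : DyadicCube d → (Fin d → ℝ) → ℝ)
    (hsupp : ∀ Q ∈ Dr, ∀ x ∉ Q.set ω, φ Q x = 0)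
    (hconst : ∀ Q ∈ Dr, ConstOnScale ω (Q.k - r) (φ Q))
    (hbd : ∀ Q x, |φ Q x| ≤ 1)
    (δ : ℝ) (hδ0 : 0 < δ) (hδ1 : δ < 1)
    (h3 : ∀ R ∈ Dr,
      volume {x | x ∈ R.set ω ∧ ∃ Q ∈ Dr, x ∈ Q.set ω ∧
          1 < |∑' Rc : DyadicCube d,
            if Rc ∈ Dr ∧ Q.set ω ⊂ Rc.set ω ∧ Rc.set ω ⊆ R.set ω then φ Rc x else 0|} ≤
        ENNReal.ofReal δ * volume (R.set ω)) :
    ∀ R ∈ Dr, ∀ t : ℝ, 0 ≤ t →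
      volume {x | x ∈ R.set ω ∧ ∃ Q ∈ Dr, x ∈ Q.set ω ∧
          t < |∑' Rc : DyadicCube d,
            if Rc ∈ Dr ∧ Q.set ω ⊂ Rc.set ω ∧ Rc.set ω ⊆ R.set ω then φ Rc x else 0|} ≤
        ENNReal.ofReal (δ ^ ((t - 1) / 2)) * volume (R.set ω) := by
  intro R hR t ht
  exact JN18.main_bound hd hr hDr hconst hbd hδ0 hδ1 (fun R' hR' => h3 R' hR') hR ht

end
end
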